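/- arXiv:2010.08988 — 3 statements merged into one kernel-verified Lean document; each statement's English description precedes it below -/
import Mathlib

section
/- Every GB-minor of a non-even oriented matroid is non-even. -/
open Relation

/-! ## Finite directed multigraphs -/

/-- A finite directed multigraph: finite vertex and edge types together with
tail and head maps (loops and parallel/anti-parallel edges are allowed). -/
structure MultiDigraph : Type 1 where
  V : Type
  E : Type
  [fv : Fintype V]
  [fe : Fintype E]
  [dv : DecidableEq V]
  [de : DecidableEq E]
  tail : E → V
  head : E → V

attribute [instance] MultiDigraph.fv MultiDigraph.fe MultiDigraph.dv MultiDigraph.de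

namespace MultiDigraph

variable (D : MultiDigraph)

/-- The set of edges crossing the partition `(X, Xᶜ)` of the vertex set. -/
def cutAt (X : Set D.V) : Set D.E :=
  {e | (D.tail e ∈ X ∧ D.head e ∉ X) ∨ (D.tail e ∉ X ∧ D.head e ∈ X)}

/-- A cut: a nonempty set of edges of the form `cutAt X`. -/
def IsCut (S : Set D.E) : Prop := S.Nonempty ∧ ∃ X : Set D.V, S = D.cutAt X

/-- A bond: a cut containing no other cut properly. -/
def IsBond (S : Set D.E) : Prop := D.IsCut S ∧ ∀ S', D.IsCut S' → S' ⊆ S → S' = S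

/-- A directed cut: a nonempty cut `cutAt X` such that no edge enters `X`. -/
def IsDirectedCut (S : Set D.E) : Prop :=
  S.Nonempty ∧ ∃ X : Set D.V, S = D.cutAt X ∧ ∀ e : D.E, ¬(D.tail e ∉ X ∧ D.head e ∈ X)

/-- A directed bond: a bond which is a directed cut. -/
def IsDirectedBond (S : Set D.E) : Prop := D.IsBond S ∧ D.IsDirectedCut S

/-- An odd dijoin: an edge set meeting every directed bond an odd number of times. -/
def IsOddDijoin (J : Set D.E) : Prop := ∀ S : Set D.E, D.IsDirectedBond S → Odd (J ∩ S).ncard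

def HasOddDijoin : Prop := ∃ J : Set D.E, D.IsOddDijoin J

/-- One-step relation used for weak connectivity of the subgraph spanned by `A`:
`x` and `y` are joined by an edge of `A`. -/
def touchRel (A : Set D.E) : D.V → D.V → Prop :=
  fun x y => ∃ e ∈ A, D.tail e = x ∧ D.head e = y

/-- Contraction `D/A`: delete the edges of `A` and identify each weak component of `D[A]`. -/
noncomputable def contract (A : Set D.E) : MultiDigraph :=
  letI s := EqvGen.setoid (D.touchRel A)
  { V := Quotient s
    E := {e : D.E // e ∉ A}
    fv := Fintype.ofFinite _
    fe := Fintype.ofFinite _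
    dv := Classical.decEq _
    de := Classical.decEq _
    tail := fun e => Quotient.mk s (D.tail e.1)
    head := fun e => Quotient.mk s (D.head e.1) }

/-- A step of a directed walk. -/
def dstep : D.V → D.V → Prop := fun a b => ∃ e : D.E, D.tail e = a ∧ D.head e = b

/-- A step of a directed walk avoiding a fixed edge `e₀`. -/
def dstepAvoiding (e₀ : D.E) : D.V → D.V → Prop :=
  fun a b => ∃ e : D.E, e ≠ e₀ ∧ D.tail e = a ∧ D.head e = b

/-- An edge is deletable if it is not a loop and there is a directed path from its tail
to its head not using it. -/
def Deletable (e : D.E) : Prop :=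
  D.tail e ≠ D.head e ∧ ReflTransGen (D.dstepAvoiding e) (D.tail e) (D.head e)

/-- Deleting one edge. -/
noncomputable def deleteEdge (e : D.E) : MultiDigraph where
  V := D.V
  E := {f : D.E // f ≠ e}
  fv := D.fv
  fe := Fintype.ofFinite _
  dv := D.dv
  de := Classical.decEq _
  tail := fun f => D.tail f.1
  head := fun f => D.head f.1

/-- An isolated vertex. -/
def Isolated (v : D.V) : Prop := ∀ e : D.E, D.tail e ≠ v ∧ D.head e ≠ v

/-- Deleting an isolated vertex. -/
noncomputable def deleteVertex (v : D.V) (h : D.Isolated v) : MultiDigraph where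
  V := {u : D.V // u ≠ v}
  E := D.E
  fv := Fintype.ofFinite _
  fe := D.fe
  dv := Classical.decEq _
  de := D.de
  tail := fun e => ⟨D.tail e, (h e).1⟩
  head := fun e => ⟨D.head e, (h e).2⟩

/-- A digraph is acyclic if it has no directed cycle. -/
def Acyclic : Prop := ∀ a b : D.V, D.dstep a b → ¬ ReflTransGen D.dstep b a

/-- A step of an undirected walk. -/
def ustep : D.V → D.V → Prop :=
  fun a b => ∃ e : D.E, (D.tail e = a ∧ D.head e = b) ∨ (D.tail e = b ∧ D.head e = a)

/-- Weak connectivity. -/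
def WeaklyConnected : Prop := ∀ a b : D.V, ReflTransGen D.ustep a b

/-- A step of an undirected walk avoiding the vertex `v`. -/
def ustepAvoiding (v : D.V) : D.V → D.V → Prop :=
  fun a b => a ≠ v ∧ b ≠ v ∧ D.ustep a b

/-- The underlying multigraph is 2-vertex-connected. -/
def TwoConnected : Prop :=
  3 ≤ Fintype.card D.V ∧ D.WeaklyConnected ∧
    ∀ v a b : D.V, a ≠ v → b ≠ v → ReflTransGen (D.ustepAvoiding v) a b

/-- `D` is an oriented graph: no loops and no pair of parallel or anti-parallel edges. -/
def Oriented : Prop :=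
  (∀ e : D.E, D.tail e ≠ D.head e) ∧
    ∀ e f : D.E, e ≠ f → ({D.tail e, D.head e} : Set D.V) ≠ {D.tail f, D.head f}

/-- `D` is transitively reduced: no edge of `D` is deletable. -/
def TransitivelyReduced : Prop := ∀ e : D.E, ¬ D.Deletable e

end MultiDigraph

/-! ## Digraph isomorphism -/

/-- An isomorphism of directed multigraphs. -/
structure DigraphIso (D₁ D₂ : MultiDigraph) where
  vmap : D₁.V ≃ D₂.V
  emap : D₁.E ≃ D₂.E
  tail_eq : ∀ e, D₂.tail (emap e) = vmap (D₁.tail e)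
  head_eq : ∀ e, D₂.head (emap e) = vmap (D₁.head e)

def IsIsomorphic (D₁ D₂ : MultiDigraph) : Prop := Nonempty (DigraphIso D₁ D₂)

/-! ## Cut minors -/

/-- A single cut-minor step: contraction of an edge, deletion of a deletable edge, or
deletion of an isolated vertex. -/
inductive CutMinorStep : MultiDigraph → MultiDigraph → Prop
  | contractEdge (D : MultiDigraph) (e : D.E) : CutMinorStep (D.contract {e}) D
  | delEdge (D : MultiDigraph) (e : D.E) (h : D.Deletable e) : CutMinorStep (D.deleteEdge e) D
  | delVertex (D : MultiDigraph) (v : D.V) (h : D.Isolated v) :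
      CutMinorStep (D.deleteVertex v h) D

/-- `D₁` is a cut minor of `D₂`. -/
def IsCutMinor (D₁ D₂ : MultiDigraph) : Prop := ReflTransGen CutMinorStep D₁ D₂

/-- A proper cut minor: a cut minor which is not isomorphic to the digraph itself. -/
def IsProperCutMinor (D₁ D₂ : MultiDigraph) : Prop :=
  IsCutMinor D₁ D₂ ∧ ¬ IsIsomorphic D₁ D₂

/-- A minimal obstruction: a digraph without an odd dijoin all of whose proper cut minors
have an odd dijoin. -/
def MinimalObstruction (D : MultiDigraph) : Prop :=
  ¬ D.HasOddDijoin ∧ ∀ D' : MultiDigraph, IsProperCutMinor D' D → D'.HasOddDijoin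

/-! ## Cycles and forests in the underlying multigraph -/

namespace MultiDigraph

variable (D : MultiDigraph)

/-- `X : D.E → SignType` is the signed incidence vector of a cycle of the underlying
multigraph of `D`, signs recording forward/backward edges of a cyclic traversal. -/
def IsSignedCycle (X : D.E → SignType) : Prop :=
  ∃ n : ℕ, 0 < n ∧ ∃ (v : ZMod n → D.V) (ed : ZMod n → D.E) (dir : ZMod n → Bool),
    Function.Injective v ∧ Function.Injective ed ∧
    (∀ i, (dir i = true → D.tail (ed i) = v i ∧ D.head (ed i) = v (i + 1)) ∧
      (dir i = false → D.tail (ed i) = v (i + 1) ∧ D.head (ed i) = v i)) ∧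
    (∀ i, X (ed i) = if dir i then 1 else -1) ∧
    (∀ f, (∀ i, ed i ≠ f) → X f = 0)

/-- The sub-multigraph spanned by `A` is a forest: it contains no cycle. -/
def IsForestOn (A : Set D.E) : Prop :=
  ¬ ∃ X : D.E → SignType, D.IsSignedCycle X ∧ ∀ e : D.E, X e ≠ 0 → e ∈ A

end MultiDigraph

/-! ## The cut space over 𝔽₂ -/

/-- Indicator vector of a set, over `𝔽₂ = ZMod 2`. -/
noncomputable def eindicator {α : Type} (C : Set α) : α → ZMod 2 := C.indicator 1

namespace MultiDigraph

variable (D : MultiDigraph)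

/-- The cut space of (the underlying multigraph of) `D`: the `𝔽₂`-span of the
indicator vectors of the bonds. -/
noncomputable def cutSpace : Submodule (ZMod 2) (D.E → ZMod 2) :=
  Submodule.span (ZMod 2) (eindicator '' {S : Set D.E | D.IsBond S})

/-- `ℬ` is a basis of the cut space of `D` (a family of edge sets whose indicator
vectors are linearly independent and span the cut space). -/
noncomputable def IsCutSpaceBasis (ℬ : Set (Set D.E)) : Prop :=
  LinearIndependent (ZMod 2) (fun S : ℬ => eindicator (S : Set D.E)) ∧
    Submodule.span (ZMod 2) (eindicator '' ℬ) = D.cutSpace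

end MultiDigraph

/-! ## Special digraphs -/

/-- The digraph `𝒟(n₀,n₁,n₂)`: three layers, with all edges from layer 0 to layer 1 and
from layer 1 to layer 2. -/
def layeredD (n₀ n₁ n₂ : ℕ) : MultiDigraph where
  V := (Fin n₀ ⊕ Fin n₁) ⊕ Fin n₂
  E := (Fin n₀ × Fin n₁) ⊕ (Fin n₁ × Fin n₂)
  tail := Sum.elim (fun p => Sum.inl (Sum.inl p.1)) (fun p => Sum.inl (Sum.inr p.1))
  head := Sum.elim (fun p => Sum.inl (Sum.inr p.2)) (fun p => Sum.inr p.2)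

/-- `K⃗_{m,n}`: the complete bipartite graph oriented from the class of size `m` to the
class of size `n`. -/
def oneDirK (m n : ℕ) : MultiDigraph where
  V := Fin m ⊕ Fin n
  E := Fin m × Fin n
  tail := fun p => Sum.inl p.1
  head := fun p => Sum.inr p.2

/-- A diamond: two hubs and `n` further vertices, each of which is either a source with its
two edges going to the hubs, or a sink with its two edges coming from the hubs
(`σ i = true` meaning `xᵢ` is a source). -/
def diamondD (n : ℕ) (σ : Fin n → Bool) : MultiDigraph where
  V := Fin n ⊕ Fin 2
  E := Fin n × Fin 2
  tail := fun p => if σ p.1 then Sum.inl p.1 else Sum.inr p.2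
  head := fun p => if σ p.1 then Sum.inr p.2 else Sum.inl p.1

/-- The bicycle `C⃡_k`: the cycle of length `k` with every edge replaced by a pair of
anti-parallel directed edges. -/
noncomputable def bicycle (k : ℕ) (hk : k ≠ 0) : MultiDigraph :=
  haveI : NeZero k := ⟨hk⟩
  { V := ZMod k
    E := ZMod k × Bool
    fv := inferInstance
    fe := inferInstance
    dv := inferInstance
    de := inferInstance
    tail := fun p => if p.2 then p.1 else p.1 + 1
    head := fun p => if p.2 then p.1 + 1 else p.1 }

/-- An odd diamond. -/
def IsOddDiamond (D : MultiDigraph) : Prop :=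
  ∃ (n : ℕ) (σ : Fin n → Bool), 3 ≤ n ∧ Odd (n + 2) ∧ IsIsomorphic D (diamondD n σ)

/-- An odd one-direction. -/
def IsOddOneDirection (D : MultiDigraph) : Prop :=
  ∃ m n : ℕ, 2 ≤ m ∧ 2 ≤ n ∧ Odd (m + n) ∧ IsIsomorphic D (oneDirK m n)

/-! ## Symmetric difference of a family of sets -/

/-- The symmetric difference of a finite family of sets. -/
def symmDiffFam {α : Type} {k : ℕ} (F : Fin k → Set α) : Set α :=
  {a | Odd ({i : Fin k | a ∈ F i}).ncard}

/-! ## Oriented matroids -/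

/-- Raw data of an oriented matroid: a finite ground set together with a collection of
signed subsets (encoded as functions to `SignType`). -/
structure PreOM : Type 1 where
  E : Type
  [fe : Fintype E]
  [de : DecidableEq E]
  circuits : Set (E → SignType)

attribute [instance] PreOM.fe PreOM.de

/-- The support of a signed set. -/
def sgnSupport {α : Type} (X : α → SignType) : Set α := {e | X e ≠ 0}

namespace PreOM

/-- The oriented matroid axioms for the collection of signed circuits. -/
def IsOM (M : PreOM) : Prop :=
  (0 : M.E → SignType) ∉ M.circuits ∧
  (∀ X ∈ M.circuits, -X ∈ M.circuits) ∧
  (∀ X ∈ M.circuits, ∀ Y ∈ M.circuits, sgnSupport X ⊆ sgnSupport Y → X = Y ∨ X = -Y) ∧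
  ∀ X ∈ M.circuits, ∀ Y ∈ M.circuits, X ≠ -Y → ∀ e : M.E, X e = 1 → Y e = -1 →
    ∃ Z ∈ M.circuits, (∀ f, Z f = 1 → f ≠ e ∧ (X f = 1 ∨ Y f = 1)) ∧
      ∀ f, Z f = -1 → f ≠ e ∧ (X f = -1 ∨ Y f = -1)

/-- The circuits of the underlying matroid: supports of signed circuits. -/
def UCircuits (M : PreOM) : Set (Set M.E) :=
  {C | ∃ X ∈ M.circuits, C = sgnSupport X}

/-- A directed circuit: the support of a signed circuit with empty negative part. -/
def IsDirectedCircuit (M : PreOM) (C : Set M.E) : Prop :=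
  ∃ X ∈ M.circuits, (∀ e, X e ≠ -1) ∧ C = {e | X e = 1}

/-- Independent sets of the underlying matroid. -/
def Indep (M : PreOM) (I : Set M.E) : Prop := ∀ C ∈ M.UCircuits, ¬ C ⊆ I

/-- Bases of the underlying matroid. -/
def IsBase (M : PreOM) (B : Set M.E) : Prop :=
  M.Indep B ∧ ∀ B', M.Indep B' → B ⊆ B' → B' = B

/-- Cocircuits of the underlying matroid: minimal sets meeting every base. -/
def IsCocircuit (M : PreOM) (S : Set M.E) : Prop :=
  (∀ B, M.IsBase B → (S ∩ B).Nonempty) ∧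
    ∀ S' : Set M.E, S' ⊂ S → ¬ ∀ B, M.IsBase B → (S' ∩ B).Nonempty

/-- Signed cocircuits: signed sets supported on a cocircuit and orthogonal to every
signed circuit. -/
def IsSignedCocircuit (M : PreOM) (Y : M.E → SignType) : Prop :=
  M.IsCocircuit (sgnSupport Y) ∧
    ∀ X ∈ M.circuits,
      ((∃ e, (Y e = 1 ∧ X e = 1) ∨ (Y e = -1 ∧ X e = -1)) ↔
        (∃ e, (Y e = 1 ∧ X e = -1) ∨ (Y e = -1 ∧ X e = 1)))

/-- An element `e` is butterfly-contractible if there is a cocircuit `S` with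
`(S \ {e}, {e})` a signed cocircuit. -/
def ButterflyContractible (M : PreOM) (e : M.E) : Prop :=
  ∃ Y : M.E → SignType, M.IsSignedCocircuit Y ∧ Y e = -1 ∧ ∀ f, f ≠ e → Y f ≠ -1

/-- Deletion of a set of elements. -/
noncomputable def deleteSet (M : PreOM) (A : Set M.E) : PreOM where
  E := {f : M.E // f ∉ A}
  fe := Fintype.ofFinite _
  de := Classical.decEq _
  circuits := {X : {f : M.E // f ∉ A} → SignType |
    ∃ X' ∈ M.circuits, (∀ a ∈ A, X' a = 0) ∧ ∀ f : {f : M.E // f ∉ A}, X f = X' f.1}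

/-- Contraction of a single element: signed circuits are the support-minimal nonempty
traces of signed circuits. -/
noncomputable def contractElem (M : PreOM) (e : M.E) : PreOM where
  E := {f : M.E // f ≠ e}
  fe := Fintype.ofFinite _
  de := Classical.decEq _
  circuits := {X : {f : M.E // f ≠ e} → SignType |
    X ≠ 0 ∧ ∃ X' ∈ M.circuits, (∀ f : {f : M.E // f ≠ e}, X f = X' f.1) ∧
      ¬ ∃ Z ∈ M.circuits, (sgnSupport Z \ {e}) ⊂ (sgnSupport X' \ {e})}

/-- Isomorphism of (pre-)oriented matroids. -/
def Iso (M N : PreOM) : Prop :=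
  ∃ σ : M.E ≃ N.E, ∀ X : N.E → SignType, X ∈ N.circuits ↔ (X ∘ σ) ∈ M.circuits

/-- A minimal dependent set of a vector configuration. -/
def IsMinimalDep {F : Type} [Field F] {n : ℕ} {E : Type} (φ : E → (Fin n → F))
    (C : Set E) : Prop :=
  ¬ LinearIndependent F (fun e : C => φ e.1) ∧
    ∀ C' : Set E, C' ⊂ C → LinearIndependent F (fun e : C' => φ e.1)

/-- The underlying matroid is regular: representable over every field. -/
def Regular (M : PreOM) : Prop :=
  ∀ (F : Type) [Field F], ∃ (n : ℕ) (φ : M.E → (Fin n → F)),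
    ∀ C : Set M.E, C ∈ M.UCircuits ↔ IsMinimalDep φ C

/-- `M` is non-even: its underlying matroid is regular and some set of elements meets
every directed circuit an odd number of times. -/
def NonEven (M : PreOM) : Prop :=
  M.Regular ∧ ∃ J : Set M.E, ∀ C : Set M.E, M.IsDirectedCircuit C → Odd (J ∩ C).ncard

/-- Totally cyclic: every element lies in a directed circuit. -/
def TotallyCyclic (M : PreOM) : Prop :=
  ∀ e : M.E, ∃ C : Set M.E, M.IsDirectedCircuit C ∧ e ∈ C

/-- Coindependent set: contains no cocircuit. -/
def Coindependent (M : PreOM) (A : Set M.E) : Prop :=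
  ∀ S : Set M.E, M.IsCocircuit S → ¬ S ⊆ A

/-- The circuit space of the underlying (binary) matroid, over `𝔽₂`. -/
noncomputable def circuitSpace (M : PreOM) : Submodule (ZMod 2) (M.E → ZMod 2) :=
  Submodule.span (ZMod 2) (eindicator '' M.UCircuits)

/-- A directed circuit basis: a family of directed circuits whose indicator vectors form a
basis of the circuit space. -/
noncomputable def IsDirectedCircuitBasis (M : PreOM) (ℬ : Set (Set M.E)) : Prop :=
  (∀ C ∈ ℬ, M.IsDirectedCircuit C) ∧
    LinearIndependent (ZMod 2) (fun C : ℬ => eindicator (C : Set M.E)) ∧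
    Submodule.span (ZMod 2) (eindicator '' ℬ) = M.circuitSpace

end PreOM

/-! ## GB-minors -/

/-- A single GB-minor step: deletion of an element, or contraction of a
butterfly-contractible element. -/
inductive GBStep : PreOM → PreOM → Prop
  | del (M : PreOM) (e : M.E) : GBStep (M.deleteSet {e}) M
  | con (M : PreOM) (e : M.E) (h : M.ButterflyContractible e) : GBStep (M.contractElem e) M

/-- `N` is a GB-minor of `M`. -/
def IsGBMinor (N M : PreOM) : Prop := ReflTransGen GBStep N M

/-! ## Oriented matroids from digraphs -/

/-- The oriented bond matroid `M*(D)` of a digraph `D`: signed circuits are the signed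
incidence vectors of the bonds of `D`. -/
def bondOM (D : MultiDigraph) : PreOM where
  E := D.E
  circuits := {X : D.E → SignType | ∃ W : Set D.V, D.IsBond (D.cutAt W) ∧
    ∀ e : D.E, (X e = 1 ↔ (D.tail e ∈ W ∧ D.head e ∉ W)) ∧
      (X e = -1 ↔ (D.head e ∈ W ∧ D.tail e ∉ W))}

/-- The oriented graphic matroid `M(D)` of a digraph `D`: signed circuits are the signed
incidence vectors of the cycles of the underlying multigraph of `D`. -/
def cycleOM (D : MultiDigraph) : PreOM where
  E := D.E
  circuits := {X : D.E → SignType | D.IsSignedCycle X}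


namespace GBAux

open Finsupp Submodule Set

variable (F : Type) [Field F] {α : Type} {V : Type} [AddCommGroup V] [Module F V]

/-- Linear independence of the family `φ` restricted to a set `T`. -/
def SInd (φ : α → V) (T : Set α) : Prop := LinearIndependent F (fun x : T => φ x.1)

variable {F}

theorem sind_iff {φ : α → V} {T : Set α} :
    SInd F φ T ↔ ∀ l ∈ Finsupp.supported F F T, Finsupp.linearCombination F φ l = 0 → l = 0 :=
  linearIndepOn_iff

theorem SInd.mono {φ : α → V} {T T' : Set α} (h : SInd F φ T) (hsub : T' ⊆ T) : SInd F φ T' := by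
  rw [sind_iff] at h ⊢
  exact fun l hl => h l (Finsupp.supported_mono hsub hl)

theorem sind_empty (φ : α → V) : SInd F φ (∅ : Set α) := by
  rw [sind_iff]
  intro l hl _
  simpa [Finsupp.supported_empty] using hl

theorem sind_insert_iff {φ : α → V} {T : Set α} {a : α} (ha : a ∉ T) :
    SInd F φ (insert a T) ↔ SInd F φ T ∧ φ a ∉ span F (φ '' T) :=
  linearIndepOn_insert ha

theorem sind_image {β : Type} {j : β → α} (hj : Function.Injective j) (φ : α → V) (C : Set β) :
    LinearIndependent F (fun x : C => φ (j x.1)) ↔ SInd F φ (j '' C) :=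
  linearIndependent_equiv' (Equiv.Set.image j C hj) (by funext x; simp)

theorem sind_singleton_iff {φ : α → V} {a : α} : SInd F φ {a} ↔ φ a ≠ 0 := by
  constructor
  · intro h h0
    rw [sind_iff] at h
    have := h (Finsupp.single a 1) (by
      rw [Finsupp.mem_supported]
      exact (Finset.coe_subset.2 Finsupp.support_single_subset).trans (by simp))
      (by simp [h0])
    exact one_ne_zero (Finsupp.single_eq_zero.1 this)
  · intro h
    have : ({a} : Set α) = insert a (∅ : Set α) := by simp
    rw [this, sind_insert_iff (by simp)]
    exact ⟨sind_empty φ, by simpa using h⟩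

omit [AddCommGroup V] [Module F V] in
theorem isMinimalDep_iff {n : ℕ} {E : Type} {ψ : E → (Fin n → F)}
    {D : Set E} : PreOM.IsMinimalDep ψ D ↔ (¬ SInd F ψ D ∧ ∀ D' ⊂ D, SInd F ψ D') := Iff.rfl

/-- The key quotient lemma. -/
theorem sind_quotient {φ : α → V} (π : V →ₗ[F] V) {e : α} (he0 : φ e ≠ 0)
    (hker : ∀ x, π x = 0 ↔ ∃ a : F, x = a • φ e) {D : Set α} (heD : e ∉ D) :
    SInd F (fun x => π (φ x)) D ↔ SInd F φ (insert e D) := by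
  classical
  have hπe : π (φ e) = 0 := (hker _).2 ⟨1, (one_smul F _).symm⟩
  have hcomb : ∀ l : α →₀ F, Finsupp.linearCombination F (fun x => π (φ x)) l
      = π (Finsupp.linearCombination F φ l) := by
    intro l
    rw [Finsupp.apply_linearCombination]
    rfl
  rw [sind_iff, sind_iff]
  constructor
  · intro h l hl hl0
    set a := l e with ha
    set l' := l - Finsupp.single e a with hl'
    have hl'supp : l' ∈ Finsupp.supported F F D := by
      rw [Finsupp.mem_supported]
      intro f hf
      simp only [Finset.mem_coe, Finsupp.mem_support_iff] at hf
      by_cases hfe : f = e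
      · exfalso; apply hf; simp [hl', hfe, ha]
      · have hfT : f ∈ insert e D := by
          apply (Finsupp.mem_supported F l).1 hl
          rw [Finset.mem_coe, Finsupp.mem_support_iff]
          intro h0
          apply hf
          simp [hl', h0, Finsupp.single_apply, Ne.symm hfe]
        rcases hfT with h | h
        · exact absurd h hfe
        · exact h
    have hlc' : Finsupp.linearCombination F (fun x => π (φ x)) l' = 0 := by
      rw [hcomb, map_sub, hl0, Finsupp.linearCombination_single, zero_sub, map_neg, map_smul,
        hπe, smul_zero, neg_zero]
    have : l' = 0 := h l' hl'supp hlc'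
    have hlsingle : l = Finsupp.single e a := by
      have := sub_eq_zero.1 (by rw [← hl']; exact this)
      exact this
    have : Finsupp.linearCombination F φ l = a • φ e := by
      rw [hlsingle]; simp
    rw [hl0] at this
    have ha0 : a = 0 := by
      rcases smul_eq_zero.1 this.symm with h | h
      · exact h
      · exact absurd h he0
    rw [hlsingle, ha0, Finsupp.single_zero]
  · intro h l hl hl0
    rw [hcomb] at hl0
    obtain ⟨a, hae⟩ := (hker _).1 hl0
    set l' := l - Finsupp.single e a with hl'
    have hl'supp : l' ∈ Finsupp.supported F F (insert e D) := by
      apply Submodule.sub_mem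
      · exact Finsupp.supported_mono (Set.subset_insert e D) hl
      · rw [Finsupp.mem_supported]
        exact (Finset.coe_subset.2 Finsupp.support_single_subset).trans (by simp)
    have hlc' : Finsupp.linearCombination F φ l' = 0 := by
      rw [hl', map_sub, Finsupp.linearCombination_single, hae, sub_self]
    have hl'0 : l' = 0 := h l' hl'supp hlc'
    have hlsingle : l = Finsupp.single e a := sub_eq_zero.1 hl'0
    have hle : l e = 0 := by
      by_contra h0
      exact heD (((Finsupp.mem_supported F l).1 hl) (by rw [Finset.mem_coe, Finsupp.mem_support_iff]; exact h0))
    have ha0 : a = 0 := by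
      have := congrFun (congrArg (fun f : α →₀ F => (f : α → F)) hlsingle) e
      simp only [Finsupp.single_apply, if_pos rfl] at this
      rw [hle] at this; exact this.symm
    rw [hlsingle, ha0, Finsupp.single_zero]

/-- Every dependent set contains a minimal dependent set. -/
theorem exists_min_dep [Finite α] (φ : α → V) :
    ∀ (n : ℕ) (T : Set α), T.ncard ≤ n → ¬ SInd F φ T →
      ∃ C ⊆ T, ¬ SInd F φ C ∧ ∀ C' ⊂ C, SInd F φ C' := by
  intro n
  induction n with
  | zero =>
    intro T hT hdep
    have hT0 : T = ∅ := (Set.ncard_eq_zero (Set.toFinite T)).1 (Nat.le_zero.1 hT)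
    exact absurd (hT0 ▸ sind_empty φ) hdep
  | succ n ih =>
    intro T hT hdep
    by_cases hall : ∀ C' ⊂ T, SInd F φ C'
    · exact ⟨T, subset_rfl, hdep, hall⟩
    · push_neg at hall
      obtain ⟨C', hC'ss, hC'dep⟩ := hall
      have hlt : C'.ncard < T.ncard := Set.ncard_lt_ncard hC'ss (Set.toFinite T)
      obtain ⟨C, hCsub, h1, h2⟩ := ih C' (by omega) hC'dep
      exact ⟨C, hCsub.trans hC'ss.subset, h1, h2⟩

end GBAux
namespace GBAux

open Finsupp Submodule Set

section Rep

variable {F : Type} [Field F] {M : PreOM} {n : ℕ} {φ : M.E → (Fin n → F)}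

variable (hrep : ∀ C : Set M.E, C ∈ M.UCircuits ↔ PreOM.IsMinimalDep φ C)

include hrep

theorem indep_iff {I : Set M.E} : M.Indep I ↔ SInd F φ I := by
  constructor
  · intro h
    by_contra hdep
    obtain ⟨C, hCI, h1, h2⟩ := exists_min_dep φ I.ncard I le_rfl hdep
    exact h C ((hrep C).2 ⟨h1, h2⟩) hCI
  · intro h C hC hCI
    exact ((hrep C).1 hC).1 (h.mono hCI)

theorem base_spans {B : Set M.E} (hB : M.IsBase B) (f : M.E) : φ f ∈ span F (φ '' B) := by
  by_contra hf
  have hfB : f ∉ B := fun hfB => hf (subset_span (Set.mem_image_of_mem φ hfB))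
  have hind : SInd F φ (insert f B) :=
    (sind_insert_iff hfB).2 ⟨(indep_iff hrep).1 hB.1, hf⟩
  have := hB.2 (insert f B) ((indep_iff hrep).2 hind) (Set.subset_insert f B)
  exact hfB (this ▸ Set.mem_insert f B)

theorem exists_base_subset {T : Set M.E} (hT : ∀ f, φ f ∈ span F (φ '' T)) :
    ∃ B ⊆ T, M.IsBase B := by
  obtain ⟨B, hB, hmax⟩ := Set.Finite.exists_maximalFor Set.ncard
    {I : Set M.E | I ⊆ T ∧ SInd F φ I} (Set.toFinite _) ⟨∅, Set.empty_subset T, sind_empty φ⟩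
  obtain ⟨hBT, hBind⟩ := hB
  have hspan : ∀ t ∈ T, φ t ∈ span F (φ '' B) := by
    intro t ht
    by_contra htB
    have htB' : t ∉ B := fun h => htB (subset_span (Set.mem_image_of_mem φ h))
    have hmem : insert t B ∈ {I : Set M.E | I ⊆ T ∧ SInd F φ I} :=
      ⟨Set.insert_subset ht hBT, (sind_insert_iff htB').2 ⟨hBind, htB⟩⟩
    have hle := hmax hmem (Set.ncard_le_ncard (Set.subset_insert t B) (Set.toFinite _))
    rw [Set.ncard_insert_of_notMem htB' (Set.toFinite B)] at hle
    omega
  have hspanall : ∀ f, φ f ∈ span F (φ '' B) := by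
    intro f
    have h1 : span F (φ '' T) ≤ span F (φ '' B) := by
      rw [span_le]
      rintro _ ⟨t, ht, rfl⟩
      exact hspan t ht
    exact h1 (hT f)
  refine ⟨B, hBT, (indep_iff hrep).2 hBind, ?_⟩
  intro B' hB' hBB'
  refine Set.Subset.antisymm ?_ hBB'
  intro f hf
  by_contra hfB
  have hind : SInd F φ (insert f B) :=
    ((indep_iff hrep).1 hB').mono (Set.insert_subset hf hBB')
  exact ((sind_insert_iff hfB).1 hind).2 (hspanall f)

theorem exists_base (hrep' : ∀ C : Set M.E, C ∈ M.UCircuits ↔ PreOM.IsMinimalDep φ C) :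
    ∃ B : Set M.E, M.IsBase B := by
  obtain ⟨B, _, hB⟩ := exists_base_subset hrep (T := Set.univ)
    (fun f => subset_span ⟨f, Set.mem_univ f, rfl⟩)
  exact ⟨B, hB⟩

end Rep

section F2

variable {M : PreOM} {n : ℕ} {φ : M.E → (Fin n → ZMod 2)}
variable (hrep : ∀ C : Set M.E, C ∈ M.UCircuits ↔ PreOM.IsMinimalDep φ C)

include hrep

theorem circuit_sum {C : Set M.E} (hC : C ∈ M.UCircuits) :
    ∃ s : Finset M.E, ↑s = C ∧ ∑ f ∈ s, φ f = 0 := by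
  classical
  obtain ⟨hdep, hmin⟩ := (hrep C).1 hC
  have hdep' : ¬ SInd (ZMod 2) φ C := hdep
  rw [sind_iff] at hdep'
  push_neg at hdep'
  obtain ⟨l, hlsupp, hlc, hlne⟩ := hdep'
  have hsub : ↑l.support ⊆ C := (Finsupp.mem_supported (ZMod 2) l).1 hlsupp
  have heq : (↑l.support : Set M.E) = C := by
    rcases hsub.ssubset_or_eq with hss | heq
    · exfalso
      have hind : SInd (ZMod 2) φ ↑l.support := hmin _ hss
      rw [sind_iff] at hind
      exact hlne (hind l ((Finsupp.mem_supported (ZMod 2) l).2 subset_rfl) hlc)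
    · exact heq
  refine ⟨l.support, heq, ?_⟩
  have hone : ∀ x : ZMod 2, x ≠ 0 → x = 1 := by decide
  rw [Finsupp.linearCombination_apply, Finsupp.sum] at hlc
  rw [← hlc]
  apply Finset.sum_congr rfl
  intro f hf
  rw [hone (l f) (Finsupp.mem_support_iff.1 hf), one_smul]

theorem cocircuit_dual {S : Set M.E} (hS : M.IsCocircuit S) :
    ∃ g : (Fin n → ZMod 2) →ₗ[ZMod 2] ZMod 2,
      (∀ f ∈ S, g (φ f) = 1) ∧ (∀ f ∉ S, g (φ f) = 0) := by
  classical
  have addself : ∀ v : Fin n → ZMod 2, v + v = 0 := by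
    intro v; funext i
    have : ∀ x : ZMod 2, x + x = 0 := by decide
    exact this (v i)
  set W : Submodule (ZMod 2) (Fin n → ZMod 2) := span (ZMod 2) (φ '' Sᶜ) with hW
  have key : ∀ s ∈ S, ∀ f, φ f ∈ span (ZMod 2) (φ '' insert s Sᶜ) := by
    intro s hs f
    have hss : S \ {s} ⊂ S := by
      constructor
      · exact Set.diff_subset
      · intro hsub
        exact absurd (hsub hs) (by simp)
    have hnot := hS.2 _ hss
    push_neg at hnot
    obtain ⟨B, hBbase, hBS⟩ := hnot
    have hBsub : B ⊆ insert s Sᶜ := by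
      intro b hb
      by_cases hbS : b ∈ S
      · by_cases hbs : b = s
        · simp [hbs]
        · exfalso
          have hmem : b ∈ (S \ {s}) ∩ B := ⟨⟨hbS, hbs⟩, hb⟩
          rw [hBS] at hmem
          exact Set.notMem_empty b hmem
      · exact Set.mem_insert_of_mem s hbS
    exact span_mono (Set.image_mono hBsub) (base_spans hrep hBbase f)
  have hnotin : ∀ s ∈ S, φ s ∉ W := by
    intro s hs hsw
    have hall : ∀ f, φ f ∈ W := by
      intro f
      have h1 := key s hs f
      rw [Set.image_insert_eq, mem_span_insert] at h1
      obtain ⟨a, z, hz, hfz⟩ := h1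
      rw [hfz]
      exact add_mem (smul_mem _ a hsw) hz
    obtain ⟨B, hBsub, hBbase⟩ := exists_base_subset hrep (T := Sᶜ) hall
    obtain ⟨x, hxS, hxB⟩ := hS.1 B hBbase
    exact hBsub hxB hxS
  have hSne : S.Nonempty := by
    obtain ⟨B₀, hB₀⟩ := exists_base hrep hrep
    obtain ⟨x, hxS, _⟩ := hS.1 B₀ hB₀
    exact ⟨x, hxS⟩
  obtain ⟨s₀, hs₀⟩ := hSne
  have hpair : ∀ s ∈ S, φ s + φ s₀ ∈ W := by
    intro s hs
    have h1 := key s₀ hs₀ s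
    rw [Set.image_insert_eq, mem_span_insert] at h1
    obtain ⟨a, z, hz, hfz⟩ := h1
    have h01 := (show ∀ x : ZMod 2, x = 0 ∨ x = 1 by decide) a
    rcases h01 with rfl | rfl
    · rw [zero_smul, zero_add] at hfz
      exact absurd (hfz ▸ hz) (hnotin s hs)
    · rw [one_smul] at hfz
      rw [hfz, add_comm (φ s₀) z, add_assoc, addself, add_zero]
      exact hz
  have hx₀ : φ s₀ ∉ (LinearPMap.mk W (0 : W →ₗ[ZMod 2] ZMod 2)).domain := hnotin s₀ hs₀
  set f' := (LinearPMap.mk W (0 : W →ₗ[ZMod 2] ZMod 2)).supSpanSingleton (φ s₀) 1 hx₀ with hf'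
  obtain ⟨g, hg⟩ := f'.toFun.exists_extend
  have hgw : ∀ w ∈ W, g w = 0 := by
    intro w hw
    have h1 := LinearPMap.supSpanSingleton_apply_mk
      (LinearPMap.mk W (0 : W →ₗ[ZMod 2] ZMod 2)) (φ s₀) 1 hx₀ w hw 0
    have h2 := (LinearMap.congr_fun hg _).trans h1
    simp at h2; exact h2
  have hgx : g (φ s₀) = 1 := by
    have h1 := LinearPMap.supSpanSingleton_apply_mk
      (LinearPMap.mk W (0 : W →ₗ[ZMod 2] ZMod 2)) (φ s₀) 1 hx₀ 0 (zero_mem W) 1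
    have h2 := (LinearMap.congr_fun hg _).trans h1
    simp at h2; exact h2
  refine ⟨g, ?_, ?_⟩
  · intro f hf
    have h1 : φ f = (φ f + φ s₀) + φ s₀ := by
      rw [add_assoc, addself, add_zero]
    rw [h1, map_add, hgw _ (hpair f hf), hgx, zero_add]
  · intro f hf
    exact hgw _ (subset_span ⟨f, hf, rfl⟩)

theorem even_inter {S C : Set M.E} (hS : M.IsCocircuit S) (hC : C ∈ M.UCircuits) :
    Even (C ∩ S).ncard := by
  classical
  obtain ⟨s, hs, hsum⟩ := circuit_sum hrep hC
  obtain ⟨g, hg1, hg0⟩ := cocircuit_dual hrep hS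
  have h0 : (0 : ZMod 2) = ∑ f ∈ s, g (φ f) := by rw [← map_sum, hsum, map_zero]
  have hgite : ∀ f, g (φ f) = if f ∈ S then 1 else 0 := by
    intro f
    by_cases hf : f ∈ S
    · rw [if_pos hf]; exact hg1 f hf
    · rw [if_neg hf]; exact hg0 f hf
  rw [Finset.sum_congr rfl (fun f _ => hgite f), Finset.sum_boole] at h0
  have hcard : (s.filter (fun f => f ∈ S)).card = (C ∩ S).ncard := by
    rw [← Set.ncard_coe_finset]
    congr 1
    ext f
    simp only [Finset.coe_filter, Set.mem_setOf_eq, Set.mem_inter_iff, ← hs, Finset.mem_coe]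
  rw [hcard] at h0
  obtain ⟨c, hc⟩ := (ZMod.natCast_eq_zero_iff _ 2).1 h0.symm
  exact ⟨c, by omega⟩

end F2

end GBAux
section Par

open GBAux

variable {α : Type}

theorem GBAux.odd_iff_cast {m : ℕ} : Odd m ↔ (m : ZMod 2) = 1 := by
  rw [Nat.odd_iff]
  constructor
  · intro h
    rw [← ZMod.natCast_mod, h, Nat.cast_one]
  · intro h
    rcases Nat.mod_two_eq_zero_or_one m with h0 | h1
    · exfalso
      rw [← ZMod.natCast_mod, h0] at h
      exact (by decide : ((0 : ℕ) : ZMod 2) ≠ 1) h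
    · exact h1

theorem GBAux.eind_apply (A : Set α) (f : α) [Decidable (f ∈ A)] :
    eindicator A f = if f ∈ A then (1 : ZMod 2) else 0 := by
  simp [eindicator, Set.indicator_apply]

theorem GBAux.ncard_cast_sum [Fintype α] (A : Set α) :
    ((A.ncard : ZMod 2)) = ∑ f : α, eindicator A f := by
  classical
  have h1 : A.ncard = (Finset.univ.filter (fun f => f ∈ A)).card := by
    rw [← Set.ncard_coe_finset]
    congr 1
    ext f
    simp
  rw [h1, Finset.sum_congr rfl (fun f _ => GBAux.eind_apply A f), Finset.sum_boole]

end Par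

namespace GBAux

section Subtypes

variable {γ : Type} {p : γ → Prop}

theorem val_image_preimage {T : Set γ} (hT : ∀ x ∈ T, p x) :
    Subtype.val '' (Subtype.val ⁻¹' T : Set (Subtype p)) = T := by
  ext x
  constructor
  · rintro ⟨⟨y, hy⟩, hmem, rfl⟩
    exact hmem
  · intro hx
    exact ⟨⟨x, hT x hx⟩, hx, rfl⟩

theorem preimage_val_image (C : Set (Subtype p)) :
    Subtype.val ⁻¹' (Subtype.val '' C) = C :=
  Set.preimage_image_eq C Subtype.val_injective

theorem image_val_ssubset {C' C : Set (Subtype p)} (h : C' ⊂ C) :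
    Subtype.val '' C' ⊂ Subtype.val '' C := by
  rw [Set.ssubset_iff_subset_ne] at h ⊢
  exact ⟨Set.image_mono h.1,
    fun he => h.2 ((Set.image_eq_image Subtype.val_injective).1 he)⟩

theorem preimage_ssubset {D' : Set γ} {C : Set (Subtype p)}
    (hD' : D' ⊂ Subtype.val '' C) (hp : ∀ x ∈ D', p x) :
    (Subtype.val ⁻¹' D' : Set (Subtype p)) ⊂ C := by
  rw [Set.ssubset_iff_subset_ne] at hD' ⊢
  constructor
  · intro x hx
    have hmem : (x : γ) ∈ Subtype.val '' C := hD'.1 hx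
    rw [← preimage_val_image C]
    exact hmem
  · intro he
    exact hD'.2 (by rw [← val_image_preimage hp, he])

theorem ncard_preimage_val {T : Set γ} (hT : ∀ x ∈ T, p x) :
    (Subtype.val ⁻¹' T : Set (Subtype p)).ncard = T.ncard := by
  conv_rhs => rw [← val_image_preimage (p := p) hT]
  exact (Set.ncard_image_of_injective _ Subtype.val_injective).symm

end Subtypes

end GBAux
namespace GBAux

open Set

theorem sindN_iff {F : Type} [Field F] {γ V : Type} [AddCommGroup V] [Module F V]
    {p : γ → Prop} (φ : γ → V) (C : Set (Subtype p)) :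
    SInd F (fun f : Subtype p => φ f.1) C ↔ SInd F φ (Subtype.val '' C) :=
  sind_image Subtype.val_injective φ C

theorem step_del (M : PreOM) (e : M.E) (hNE : M.NonEven) : (M.deleteSet {e}).NonEven := by
  classical
  obtain ⟨hreg, J, hJ⟩ := hNE
  constructor
  · -- regularity
    intro F _
    obtain ⟨n, φ, hrep⟩ := hreg F
    refine ⟨n, fun f => φ f.1, ?_⟩
    intro C
    constructor
    · rintro ⟨X, ⟨X', hX', hX'0, hXX'⟩, rfl⟩
      have hD : e ∉ sgnSupport X' := fun h => h (hX'0 e rfl)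
      have hpD : ∀ x ∈ sgnSupport X', x ∉ ({e} : Set M.E) := by
        intro x hx hxe
        rw [Set.mem_singleton_iff] at hxe
        subst hxe
        exact hD hx
      have hsupp : sgnSupport X = Subtype.val ⁻¹' sgnSupport X' := by
        ext f
        simp only [sgnSupport, Set.mem_setOf_eq, Set.mem_preimage, hXX' f]
        exact Iff.rfl
      have himg : Subtype.val '' (Subtype.val ⁻¹' sgnSupport X' :
          Set {f : M.E // f ∉ ({e} : Set M.E)}) = sgnSupport X' := val_image_preimage hpD
      have hmd : PreOM.IsMinimalDep φ (sgnSupport X') := (hrep _).1 ⟨X', hX', rfl⟩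
      rw [isMinimalDep_iff] at hmd ⊢
      constructor
      · intro habs
        apply hmd.1
        rw [← himg]
        exact (sindN_iff φ _).1 (hsupp ▸ habs)
      · intro C' hC'
        rw [hsupp] at hC'
        have h2 := image_val_ssubset hC'
        rw [himg] at h2
        exact (sindN_iff φ C').2 (hmd.2 _ h2)
    · intro hC
      rw [isMinimalDep_iff] at hC
      set D := Subtype.val '' C with hD
      have hpD : ∀ x ∈ D, x ∉ ({e} : Set M.E) := by
        rintro _ ⟨⟨y, hy⟩, _, rfl⟩
        exact hy
      have hmdD : PreOM.IsMinimalDep φ D := by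
        rw [isMinimalDep_iff]
        constructor
        · intro habs
          exact hC.1 ((sindN_iff φ C).2 habs)
        · intro D' hD'
          have hC' := preimage_ssubset hD' (fun x hx => hpD x (hD'.subset hx))
          have := (sindN_iff φ _).1 (hC.2 _ hC')
          rwa [val_image_preimage (fun x hx => hpD x (hD'.subset hx))] at this
      obtain ⟨X', hX', hsuppX'⟩ := (hrep D).2 hmdD
      refine ⟨fun f => X' f.1, ⟨X', hX', ?_, fun f => rfl⟩, ?_⟩
      · intro a ha
        rw [Set.mem_singleton_iff] at ha
        subst ha
        by_contra h0
        exact hpD a (hsuppX' ▸ h0 : a ∈ D) rfl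
      · rw [← preimage_val_image C, ← hD, hsuppX']
        rfl
  · -- odd dijoin
    refine ⟨Subtype.val ⁻¹' J, ?_⟩
    rintro C ⟨X, ⟨X', hX', hX'0, hXX'⟩, hXpos, hCeq⟩
    have hX'pos : ∀ f, X' f ≠ -1 := by
      intro f
      by_cases hf : f ∈ ({e} : Set M.E)
      · rw [hX'0 f hf]
        decide
      · have h1 := hXpos ⟨f, hf⟩
        rwa [hXX' ⟨f, hf⟩] at h1
    have hodd := hJ _ ⟨X', hX', hX'pos, rfl⟩
    have hCpre : C = Subtype.val ⁻¹' {g | X' g = 1} := by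
      rw [hCeq]
      ext f
      simp only [Set.mem_setOf_eq, Set.mem_preimage, hXX' f]
      exact Iff.rfl
    have hsub : ∀ x ∈ J ∩ {g | X' g = 1}, x ∉ ({e} : Set M.E) := by
      rintro x ⟨_, hx2⟩ hxe
      rw [Set.mem_singleton_iff] at hxe
      subst hxe
      have hx3 : X' x = 1 := hx2
      rw [hX'0 x rfl] at hx3
      exact (by decide : ¬ ((0 : SignType) = 1)) hx3
    rw [hCpre]
    change Odd ((Subtype.val ⁻¹' (J ∩ {g | X' g = 1}) : Set {f : M.E // f ∉ ({e} : Set M.E)})).ncard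
    rw [ncard_preimage_val hsub]
    exact hodd

end GBAux
namespace GBAux

open Set

theorem even_iff_cast {m : ℕ} : Even m ↔ (m : ZMod 2) = 0 := by
  rw [Nat.even_iff]
  constructor
  · intro h
    rw [← ZMod.natCast_mod, h, Nat.cast_zero]
  · intro h
    rcases Nat.mod_two_eq_zero_or_one m with h0 | h1
    · exact h0
    · exfalso
      rw [← ZMod.natCast_mod, h1] at h
      exact (by decide : ((1 : ℕ) : ZMod 2) ≠ 0) h

theorem sgncases : ∀ s : SignType, s = -1 ∨ s = 0 ∨ s = 1 := by decide

theorem step_con (M : PreOM) (e : M.E) (hbf : M.ButterflyContractible e) (hNE : M.NonEven) :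
    (M.contractElem e).NonEven := by
  classical
  obtain ⟨Y, hY, hYe, hYother⟩ := hbf
  obtain ⟨hreg, J, hJ⟩ := hNE
  -- e is not a loop
  have not_loop : ({e} : Set M.E) ∉ M.UCircuits := by
    rintro ⟨X, hX, hsupp⟩
    have hXe : X e ≠ 0 := by
      have h1 : e ∈ sgnSupport X := by rw [← hsupp]; exact rfl
      exact h1
    have hXother : ∀ f, f ≠ e → X f = 0 := by
      intro f hf
      by_contra h0
      have h1 : f ∈ sgnSupport X := h0
      rw [← hsupp] at h1
      exact hf h1
    have hsolo : ∀ f, X f ≠ 0 → f = e := by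
      intro f h0
      by_contra hfe
      exact h0 (hXother f hfe)
    have horth := hY.2 X hX
    rcases sgncases (X e) with h1 | h1 | h1
    · obtain ⟨f, hf⟩ := horth.1 ⟨e, Or.inr ⟨hYe, h1⟩⟩
      rcases hf with ⟨hf1, hf2⟩ | ⟨hf1, hf2⟩
      · have hfe := hsolo f (by rw [hf2]; decide)
        subst hfe
        rw [hYe] at hf1
        exact (by decide : ¬((-1 : SignType) = 1)) hf1
      · have hfe := hsolo f (by rw [hf2]; decide)
        subst hfe
        rw [h1] at hf2
        exact (by decide : ¬((-1 : SignType) = 1)) hf2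
    · exact hXe h1
    · obtain ⟨f, hf⟩ := horth.2 ⟨e, Or.inr ⟨hYe, h1⟩⟩
      rcases hf with ⟨hf1, hf2⟩ | ⟨hf1, hf2⟩
      · have hfe := hsolo f (by rw [hf2]; decide)
        subst hfe
        rw [hYe] at hf1
        exact (by decide : ¬((-1 : SignType) = 1)) hf1
      · have hfe := hsolo f (by rw [hf2]; decide)
        subst hfe
        rw [h1] at hf2
        exact (by decide : ¬((1 : SignType) = -1)) hf2
  -- a circuit whose trace is nonnegative cannot use e negatively
  have no_reverse : ∀ X' ∈ M.circuits, (∀ f, f ≠ e → X' f ≠ -1) → X' e ≠ -1 := by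
    intro X' hX' hpos habs
    obtain ⟨f, hf⟩ := (hY.2 X' hX').1 ⟨e, Or.inr ⟨hYe, habs⟩⟩
    rcases hf with ⟨hf1, hf2⟩ | ⟨hf1, hf2⟩
    · by_cases hfe : f = e
      · subst hfe
        rw [hYe] at hf1
        exact (by decide : ¬((-1 : SignType) = 1)) hf1
      · exact hpos f hfe hf2
    · by_cases hfe : f = e
      · subst hfe
        rw [habs] at hf2
        exact (by decide : ¬((-1 : SignType) = 1)) hf2
      · exact hYother f hfe hf1
  have himgpre : ∀ T : Set M.E,
      Subtype.val '' (Subtype.val ⁻¹' T : Set {f : M.E // f ≠ e}) = T \ {e} := by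
    intro T
    ext x
    constructor
    · rintro ⟨⟨y, hy⟩, hmem, rfl⟩
      exact ⟨hmem, by simpa using hy⟩
    · rintro ⟨hxT, hxe⟩
      exact ⟨⟨x, by simpa using hxe⟩, hxT, rfl⟩
  constructor
  · -- regularity
    intro F _
    obtain ⟨n, φ, hrep⟩ := hreg F
    have he0 : φ e ≠ 0 := by
      intro h0
      apply not_loop
      rw [hrep, isMinimalDep_iff]
      constructor
      · intro hind
        exact (sind_singleton_iff.1 hind) h0
      · intro C' hC'
        rw [Set.ssubset_singleton_iff] at hC'
        rw [hC']
        exact sind_empty φ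
    obtain ⟨i, hi⟩ : ∃ i, φ e i ≠ 0 := by
      by_contra hall
      push_neg at hall
      exact he0 (funext hall)
    set g₀ : (Fin n → F) →ₗ[F] F := (φ e i)⁻¹ • LinearMap.proj i with hg₀
    have hg₀e : g₀ (φ e) = 1 := by
      simp only [hg₀, LinearMap.smul_apply, LinearMap.proj_apply, smul_eq_mul]
      exact inv_mul_cancel₀ hi
    set π : (Fin n → F) →ₗ[F] (Fin n → F) :=
      LinearMap.id - (LinearMap.smulRight g₀ (φ e)) with hπ
    have hπx : ∀ x, π x = x - g₀ x • φ e := fun x => rfl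
    have hπe : π (φ e) = 0 := by
      rw [hπx, hg₀e, one_smul, sub_self]
    have hker : ∀ x, π x = 0 ↔ ∃ a : F, x = a • φ e := by
      intro x
      constructor
      · intro h
        refine ⟨g₀ x, ?_⟩
        exact sub_eq_zero.1 (by rw [← hπx x]; exact h)
      · rintro ⟨a, rfl⟩
        rw [map_smul, hπe, smul_zero]
    set φN : {f : M.E // f ≠ e} → (Fin n → F) := fun f => π (φ f.1) with hφN
    have hCiff : ∀ (C : Set {f : M.E // f ≠ e}),
        SInd F φN C ↔ SInd F φ (insert e (Subtype.val '' C)) := by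
      intro C
      have heC : e ∉ Subtype.val '' C := by
        rintro ⟨⟨y, hy⟩, _, h⟩
        exact hy h
      exact (sind_image Subtype.val_injective (fun x => π (φ x)) C).trans
        (sind_quotient π he0 hker heC)
    refine ⟨n, φN, ?_⟩
    intro C
    constructor
    · rintro ⟨X, ⟨hX0, X', hX', hXX', hminTr⟩, rfl⟩
      have hCpre : sgnSupport X = Subtype.val ⁻¹' sgnSupport X' := by
        ext f
        simp only [sgnSupport, Set.mem_setOf_eq, Set.mem_preimage, hXX' f]
        exact Iff.rfl
      set D := Subtype.val '' (sgnSupport X) with hD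
      have hDeq : D = sgnSupport X' \ {e} := by rw [hD, ← himgpre]; exact congrArg _ hCpre
      have hdep : ¬ SInd F φ (insert e D) := by
        intro hind
        have hsub : sgnSupport X' ⊆ insert e D := by
          intro f hf
          by_cases hfe : f = e
          · exact hfe ▸ Set.mem_insert e D
          · exact Set.mem_insert_of_mem e (by rw [hDeq]; exact ⟨hf, by simpa using hfe⟩)
        exact ((hrep _).1 ⟨X', hX', rfl⟩).1 (hind.mono hsub)
      refine isMinimalDep_iff.2 ?_
      constructor
      · intro habs
        exact hdep ((hCiff _).1 habs)
      · intro C' hC'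
        refine (hCiff C').2 ?_
        by_contra hdep'
        obtain ⟨C₀, hC₀sub, h1, h2⟩ :=
          exists_min_dep φ (insert e (Subtype.val '' C')).ncard _ le_rfl hdep'
        obtain ⟨Z, hZ, hZsupp⟩ := (hrep C₀).2 ⟨h1, h2⟩
        apply hminTr
        refine ⟨Z, hZ, ?_⟩
        have hZD : sgnSupport Z \ {e} ⊆ Subtype.val '' C' := by
          rintro f ⟨hf1, hf2⟩
          have hf1' : f ∈ C₀ := by rw [hZsupp]; exact hf1
          rcases hC₀sub hf1' with h | h
          · exact absurd h hf2
          · exact h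
        have hC'D : Subtype.val '' C' ⊂ D := by
          have h3 := image_val_ssubset hC'
          rw [hD]
          exact h3
        rw [show sgnSupport X' \ {e} = D from hDeq.symm]
        exact ssubset_of_subset_of_ssubset hZD hC'D
    · intro hC
      replace hC := isMinimalDep_iff.1 hC
      set D := Subtype.val '' C with hD
      have heD : e ∉ D := by
        rintro ⟨⟨y, hy⟩, _, h⟩
        exact hy h
      have hdep : ¬ SInd F φ (insert e D) := fun h => hC.1 ((hCiff C).2 h)
      obtain ⟨C₀, hC₀sub, h1, h2⟩ := exists_min_dep φ (insert e D).ncard _ le_rfl hdep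
      obtain ⟨X', hX', hX'supp⟩ := (hrep C₀).2 ⟨h1, h2⟩
      have hTsub : C₀ \ {e} ⊆ D := by
        rintro f ⟨hf1, hf2⟩
        rcases hC₀sub hf1 with h | h
        · exact absurd h hf2
        · exact h
      have hC₀ne : ¬ C₀ ⊆ {e} := by
        intro hsub
        rcases Set.subset_singleton_iff_eq.1 hsub with h0 | h0
        · rw [h0] at h1
          exact h1 (sind_empty φ)
        · apply not_loop
          rw [← h0]
          exact (hrep C₀).2 ⟨h1, h2⟩
      have hTne : (C₀ \ {e}).Nonempty := by
        rw [Set.nonempty_iff_ne_empty]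
        intro h0
        apply hC₀ne
        intro x hx
        by_contra hxe
        exact (Set.eq_empty_iff_forall_notMem.1 h0 x) ⟨hx, hxe⟩
      have hTD : C₀ \ {e} = D := by
        rcases hTsub.ssubset_or_eq with hss | heq
        · exfalso
          have hpT : ∀ x ∈ C₀ \ {e}, x ≠ e := fun x hx => by simpa using hx.2
          have hCT := preimage_ssubset (C := C) (by rw [← hD]; exact hss) hpT
          have hind := hC.2 _ hCT
          have h3 := (hCiff _).1 hind
          rw [val_image_preimage hpT] at h3
          have hsub2 : C₀ ⊆ insert e (C₀ \ {e}) := by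
            intro x hx
            by_cases hxe : x = e
            · exact hxe ▸ Set.mem_insert _ _
            · exact Set.mem_insert_of_mem _ ⟨hx, by simpa using hxe⟩
          exact h1 (h3.mono hsub2)
        · exact heq
      set X : {f : M.E // f ≠ e} → SignType := fun f => X' f.1 with hXdef
      have hXC : sgnSupport X = C := by
        ext f
        have hmem1 : f ∈ sgnSupport X ↔ f.1 ∈ C₀ := by
          rw [hX'supp]
          exact Iff.rfl
        have hmem2 : f.1 ∈ C₀ ↔ f.1 ∈ D := by
          constructor
          · intro h
            rw [← hTD]
            exact ⟨h, by simpa using f.2⟩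
          · intro h
            rw [← hTD] at h
            exact h.1
        have hmem3 : f.1 ∈ D ↔ f ∈ C := by
          constructor
          · rintro ⟨y, hy, hyf⟩
            rwa [show y = f from Subtype.val_injective hyf] at hy
          · intro h
            exact ⟨f, h, rfl⟩
        rw [hmem1, hmem2, hmem3]
        exact Iff.rfl
      refine ⟨X, ⟨?_, X', hX', fun f => rfl, ?_⟩, hXC.symm⟩
      · intro h0
        obtain ⟨d, hd⟩ := hTne
        have hdne : d ≠ e := by simpa using hd.2
        have hzero : X ⟨d, hdne⟩ = 0 := by rw [h0]; rfl
        have hd' : X' d ≠ 0 := by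
          have : d ∈ sgnSupport X' := by rw [← hX'supp]; exact hd.1
          exact this
        exact hd' hzero
      · rintro ⟨Z, hZ, hZss⟩
        have hX'T : sgnSupport X' \ {e} = D := by rw [← hX'supp]; exact hTD
        rw [hX'T] at hZss
        by_cases hZe : (sgnSupport Z \ {e}) = ∅
        · rw [hZe] at hZss
          have hZsub : sgnSupport Z ⊆ {e} := by
            intro x hx
            by_contra hxe
            exact (Set.eq_empty_iff_forall_notMem.1 hZe x) ⟨hx, hxe⟩
          rcases Set.subset_singleton_iff_eq.1 hZsub with h0 | h0
          · have := ((hrep _).1 ⟨Z, hZ, rfl⟩).1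
            rw [h0] at this
            exact this (sind_empty φ)
          · exact not_loop (h0 ▸ ⟨Z, hZ, rfl⟩)
        · have hZne : ∀ x ∈ sgnSupport Z \ {e}, x ≠ e := fun x hx => by simpa using hx.2
          have hCZ := preimage_ssubset (C := C) (by rw [← hD]; exact hZss) hZne
          have hind := hC.2 _ hCZ
          have h3 := (hCiff _).1 hind
          rw [val_image_preimage hZne] at h3
          have hsub2 : sgnSupport Z ⊆ insert e (sgnSupport Z \ {e}) := by
            intro x hx
            by_cases hxe : x = e
            · exact hxe ▸ Set.mem_insert _ _
            · exact Set.mem_insert_of_mem _ ⟨hx, by simpa using hxe⟩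
          exact ((hrep _).1 ⟨Z, hZ, rfl⟩).1 (h3.mono hsub2)
  · -- the odd dijoin
    set P : Set M.E := {f | Y f = 1} with hP
    have hkey : ∀ C : Set (M.contractElem e).E, (M.contractElem e).IsDirectedCircuit C →
        ∃ C' : Set M.E, M.IsDirectedCircuit C' ∧ C = Subtype.val ⁻¹' C' ∧
          Even ((C' ∩ sgnSupport Y).ncard) := by
      rintro C ⟨X, ⟨hX0, X', hX', hXX', hminTr⟩, hXpos, hCeq⟩
      have hX'pos : ∀ f, f ≠ e → X' f ≠ -1 := by
        intro f hf
        have h1 := hXpos ⟨f, hf⟩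
        rwa [hXX' ⟨f, hf⟩] at h1
      have hX'dir : ∀ f, X' f ≠ -1 := by
        intro f
        by_cases hf : f = e
        · exact hf ▸ no_reverse X' hX' hX'pos
        · exact hX'pos f hf
      refine ⟨{g | X' g = 1}, ⟨X', hX', hX'dir, rfl⟩, ?_, ?_⟩
      · rw [hCeq]
        ext f
        simp only [Set.mem_setOf_eq, Set.mem_preimage, hXX' f]
        exact Iff.rfl
      · have hC'supp : {g | X' g = 1} = sgnSupport X' := by
          ext f
          simp only [Set.mem_setOf_eq, sgnSupport]
          constructor
          · intro h
            rw [h]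
            decide
          · intro h
            rcases sgncases (X' f) with h1 | h1 | h1
            · exact absurd h1 (hX'dir f)
            · exact absurd h1 h
            · exact h1
        obtain ⟨n2, φ2, hrep2⟩ := hreg (ZMod 2)
        rw [hC'supp]
        exact even_inter hrep2 hY.1 ⟨X', hX', rfl⟩
    by_cases heJ : e ∈ J
    · -- e ∈ J : use J xor P
      set J₀ : Set M.E := {f | ¬ (f ∈ J ↔ f ∈ P)} with hJ₀
      refine ⟨Subtype.val ⁻¹' J₀, ?_⟩
      intro C hC
      obtain ⟨C', hC'dir, hCpre, heven⟩ := hkey C hC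
      have hodd := hJ C' hC'dir
      have hgoal : (Subtype.val ⁻¹' J₀ ∩ C).ncard = (J₀ ∩ (C' \ {e})).ncard := by
        rw [hCpre, ← Set.preimage_inter]
        have h1 : (Subtype.val ⁻¹' (J₀ ∩ C') : Set {f : M.E // f ≠ e}) =
            Subtype.val ⁻¹' (J₀ ∩ (C' \ {e})) := by
          ext f
          simp only [Set.mem_preimage, Set.mem_inter_iff, Set.mem_diff,
            Set.mem_singleton_iff]
          exact ⟨fun ⟨a, b⟩ => ⟨a, b, f.2⟩, fun ⟨a, b, _⟩ => ⟨a, b⟩⟩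
        rw [h1, ncard_preimage_val (fun x hx => hx.2.2)]
      refine (congrArg Odd hgoal).mpr ?_
      rw [odd_iff_cast, ncard_cast_sum]
      rw [odd_iff_cast, ncard_cast_sum] at hodd
      have heven2 : (∑ f : M.E, eindicator (C' ∩ sgnSupport Y) f) = 0 := by
        rw [← ncard_cast_sum, ← even_iff_cast]
        exact heven
      have hpt : ∀ f : M.E, eindicator (J₀ ∩ (C' \ {e})) f
          = eindicator (J ∩ C') f + eindicator (C' ∩ sgnSupport Y) f := by
        intro f
        rw [eind_apply, eind_apply, eind_apply]
        by_cases hfe : f = e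
        · subst hfe
          rw [if_neg (fun h => h.2.2 rfl)]
          by_cases hec : f ∈ C'
          · rw [if_pos ⟨heJ, hec⟩, if_pos ⟨hec, (show Y f ≠ 0 by rw [hYe]; decide)⟩]
            decide
          · rw [if_neg (fun h => hec h.2), if_neg (fun h => hec h.1)]
            decide
        · have hfSY : f ∈ sgnSupport Y ↔ f ∈ P := by
            constructor
            · intro h
              rcases sgncases (Y f) with h1 | h1 | h1
              · exact absurd h1 (hYother f hfe)
              · exact absurd h1 h
              · exact h1
            · intro h
              have h1 : Y f = 1 := h
              have : Y f ≠ 0 := by rw [h1]; decide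
              exact this
          by_cases hfC : f ∈ C'
          · by_cases hfJ : f ∈ J <;> by_cases hfP : f ∈ P
            · rw [if_neg (fun h => (h.1 : ¬ (f ∈ J ↔ f ∈ P)) (iff_of_true hfJ hfP)),
                if_pos ⟨hfJ, hfC⟩, if_pos ⟨hfC, hfSY.2 hfP⟩]
              decide
            · rw [if_pos ⟨(fun h => hfP (h.1 hfJ)), hfC, hfe⟩,
                if_pos ⟨hfJ, hfC⟩, if_neg (fun h => hfP (hfSY.1 h.2))]
              decide
            · rw [if_pos ⟨(fun h => hfJ (h.2 hfP)), hfC, hfe⟩,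
                if_neg (fun h => hfJ h.1), if_pos ⟨hfC, hfSY.2 hfP⟩]
              decide
            · rw [if_neg (fun h => (h.1 : ¬ (f ∈ J ↔ f ∈ P)) (iff_of_false hfJ hfP)),
                if_neg (fun h => hfJ h.1), if_neg (fun h => hfP (hfSY.1 h.2))]
              decide
          · rw [if_neg (fun h => hfC h.2.1), if_neg (fun h => hfC h.2),
              if_neg (fun h => hfC h.1)]
            decide
      rw [Finset.sum_congr rfl (fun f _ => hpt f), Finset.sum_add_distrib, hodd, heven2]
      decide
    · -- e ∉ J
      refine ⟨Subtype.val ⁻¹' J, ?_⟩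
      intro C hC
      obtain ⟨C', hC'dir, hCpre, _⟩ := hkey C hC
      have hodd := hJ C' hC'dir
      have heC' : J ∩ C' = J ∩ (C' \ {e}) := by
        ext f
        simp only [Set.mem_inter_iff, Set.mem_diff, Set.mem_singleton_iff]
        constructor
        · rintro ⟨a, b⟩
          exact ⟨a, b, fun h => heJ (h ▸ a)⟩
        · rintro ⟨a, b, _⟩
          exact ⟨a, b⟩
      have hgoal : (Subtype.val ⁻¹' J ∩ C).ncard = (J ∩ (C' \ {e})).ncard := by
        rw [hCpre, ← Set.preimage_inter]
        have h1 : (Subtype.val ⁻¹' (J ∩ C') : Set {f : M.E // f ≠ e}) =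
            Subtype.val ⁻¹' (J ∩ (C' \ {e})) := by
          rw [heC']
        rw [h1, ncard_preimage_val (fun x hx => hx.2.2)]
      refine (congrArg Odd hgoal).mpr ?_
      rw [← heC']
      exact hodd

end GBAux
namespace GBAux

theorem step_preserves {N M : PreOM} (h : GBStep N M) (hNE : M.NonEven) : N.NonEven := by
  cases h with
  | del M e => exact step_del M e hNE
  | con M e hbc => exact step_con M e hbc hNE

end GBAux

-- STATEMENT 3
theorem stmt3 (M : PreOM) (hM : M.IsOM) (hNE : M.NonEven)
    (N : PreOM) (hmin : IsGBMinor N M) : N.NonEven := by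
  clear hM
  revert hNE
  induction hmin with
  | refl => exact id
  | tail h₁ h₂ ih => exact fun hNE => ih (GBAux.step_preserves h₂ hNE)
end

section
/- Let D₁ and D₂ be digraphs such that D₁ is a cut minor of D₂. If D₂ admits an odd dijoin, then so does D₁. -/
open Relation

/-! ### Auxiliary lemmas for stmt5 -/

section Stmt5Aux

open Set

lemma stmt5_odd_ncard_symmDiff {α : Type} [Fintype α] (A B : Set α) :
    Odd ((symmDiff A B).ncard) ↔ ¬ (Odd A.ncard ↔ Odd B.ncard) := by
  classical
  have h1 : (symmDiff A B).ncard = (A \ B).ncard + (B \ A).ncard := by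
    rw [Set.symmDiff_def]
    exact Set.ncard_union_eq disjoint_sdiff_sdiff (Set.toFinite _) (Set.toFinite _)
  have h2 : (A \ B).ncard + (A ∩ B).ncard = A.ncard := by
    rw [← Set.diff_self_inter]
    exact Set.ncard_diff_add_ncard_of_subset Set.inter_subset_left (Set.toFinite _)
  have h3 : (B \ A).ncard + (A ∩ B).ncard = B.ncard := by
    rw [Set.inter_comm, ← Set.diff_self_inter]
    exact Set.ncard_diff_add_ncard_of_subset Set.inter_subset_left (Set.toFinite _)
  simp only [Nat.odd_iff] at *
  omega

lemma stmt5_ncard_inter_image {α : Type} {p : α → Prop} (J : Set α) (S : Set {f // p f}) :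
    (J ∩ (Subtype.val '' S)).ncard = ({f : {f // p f} | f.1 ∈ J} ∩ S).ncard := by
  rw [← Set.ncard_image_of_injective ({f : {f // p f} | f.1 ∈ J} ∩ S) Subtype.val_injective]
  congr 1
  ext x
  constructor
  · rintro ⟨hx, g, hg, rfl⟩; exact ⟨g, ⟨hx, hg⟩, rfl⟩
  · rintro ⟨g, ⟨h1, h2⟩, rfl⟩; exact ⟨h1, g, h2, rfl⟩

lemma stmt5_mem_cut_iff (D : MultiDigraph) (f : D.E) (X : Set D.V) :
    f ∈ D.cutAt X ↔ ¬ (D.tail f ∈ X ↔ D.head f ∈ X) := by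
  simp only [MultiDigraph.cutAt, Set.mem_setOf_eq]
  tauto

lemma stmt5_cutAt_symmDiff (D : MultiDigraph) (X Y : Set D.V) :
    D.cutAt (symmDiff X Y) = symmDiff (D.cutAt X) (D.cutAt Y) := by
  ext f
  simp only [MultiDigraph.cutAt, Set.mem_setOf_eq, Set.mem_symmDiff]
  tauto

lemma stmt5_enter_of_walk (D : MultiDigraph) (e : D.E) {a b : D.V} (X : Set D.V)
    (h : Relation.ReflTransGen (D.dstepAvoiding e) a b) (ha : a ∉ X) :
    b ∈ X → ∃ f, f ≠ e ∧ D.tail f ∉ X ∧ D.head f ∈ X := by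
  induction h with
  | refl => exact fun hb => absurd hb ha
  | @tail c b hac step ih =>
    intro hb
    obtain ⟨f, hfe, hft, hfh⟩ := step
    by_cases hc : c ∈ X
    · exact ih hc
    · exact ⟨f, hfe, hft ▸ hc, hfh ▸ hb⟩

lemma stmt5_prop_aux (P Q R : Prop) : (¬ (¬ (P ↔ Q) ↔ ¬ (Q ↔ R)) ↔ ¬ (P ↔ R)) := by
  tauto

lemma stmt5_exists_parity_set (D : MultiDigraph) (e : D.E) {a b : D.V}
    (h : Relation.ReflTransGen (D.dstepAvoiding e) a b) :
    ∃ T : Set D.E, e ∉ T ∧ ∀ X : Set D.V,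
      (Odd ((T ∩ D.cutAt X).ncard) ↔ ¬ (a ∈ X ↔ b ∈ X)) := by
  induction h with
  | refl => exact ⟨∅, Set.notMem_empty e, fun X => by simp⟩
  | @tail c b hac step ih =>
    obtain ⟨T, heT, hT⟩ := ih
    obtain ⟨f, hfe, hft, hfh⟩ := step
    refine ⟨symmDiff T {f}, ?_, fun X => ?_⟩
    · intro hmem
      rw [Set.mem_symmDiff] at hmem
      rcases hmem with ⟨h1, -⟩ | ⟨h1, -⟩
      · exact heT h1
      · exact hfe (Set.mem_singleton_iff.mp h1).symm
    · have hdist : symmDiff T {f} ∩ D.cutAt X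
          = symmDiff (T ∩ D.cutAt X) ({f} ∩ D.cutAt X) := by
        ext x
        simp only [Set.mem_inter_iff, Set.mem_symmDiff]
        tauto
      rw [hdist, stmt5_odd_ncard_symmDiff, hT X]
      have hsing : Odd ((({f} : Set D.E) ∩ D.cutAt X).ncard) ↔ f ∈ D.cutAt X := by
        by_cases hf : f ∈ D.cutAt X
        · rw [Set.inter_eq_self_of_subset_left (Set.singleton_subset_iff.mpr hf)]
          simp [hf]
        · rw [Set.singleton_inter_eq_empty.mpr hf]
          simp [hf]
      rw [hsing, stmt5_mem_cut_iff, hft, hfh]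
      exact stmt5_prop_aux _ _ _

lemma stmt5_contract_saturated (D : MultiDigraph) (e : D.E) (Y : Set D.V)
    (hY : D.tail e ∈ Y ↔ D.head e ∈ Y) {v w : D.V}
    (h : Relation.EqvGen (D.touchRel {e}) v w) : v ∈ Y ↔ w ∈ Y := by
  induction h with
  | rel x y hxy =>
    obtain ⟨f, hf, ht, hh⟩ := hxy
    rw [Set.mem_singleton_iff] at hf
    subst hf
    rw [← ht, ← hh]
    exact hY
  | refl x => exact Iff.rfl
  | symm x y _ ih => exact ih.symm
  | trans x y z _ _ ih1 ih2 => exact ih1.trans ih2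

end Stmt5Aux
section Stmt5Cases

lemma stmt5_mem_val_image {β : Type} {p : β → Prop} (X : Set {x // p x}) (x : β) (hx : p x) :
    x ∈ Subtype.val '' X ↔ (⟨x, hx⟩ : {x // p x}) ∈ X := by
  constructor
  · rintro ⟨⟨y, hy⟩, hmem, rfl⟩; exact hmem
  · exact fun h => ⟨_, h, rfl⟩

lemma stmt5_delVertex (D : MultiDigraph) (v : D.V) (hv : D.Isolated v)
    (hd : D.HasOddDijoin) : (D.deleteVertex v hv).HasOddDijoin := by
  obtain ⟨J, hJ⟩ := hd
  refine ⟨J, ?_⟩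
  rintro S ⟨⟨-, hmin⟩, hne, X, hSX, hdir⟩
  have hcut : (D.deleteVertex v hv).cutAt X = D.cutAt (Subtype.val '' X) := by
    ext f
    simp only [MultiDigraph.cutAt, Set.mem_setOf_eq]
    rw [show ((D.deleteVertex v hv).tail f ∈ X) ↔ D.tail f ∈ Subtype.val '' X from
      (stmt5_mem_val_image X (D.tail f) (hv f).1).symm,
      show ((D.deleteVertex v hv).head f ∈ X) ↔ D.head f ∈ Subtype.val '' X from
      (stmt5_mem_val_image X (D.head f) (hv f).2).symm]
    exact Iff.rfl
  have hcut2 : ∀ Y : Set D.V, D.cutAt Y = (D.deleteVertex v hv).cutAt (Subtype.val ⁻¹' Y) :=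
    fun _ => rfl
  have hbond : D.IsDirectedBond S := by
    refine ⟨⟨⟨hne, Subtype.val '' X, by rw [hSX, hcut]⟩, ?_⟩, hne, Subtype.val '' X,
      by rw [hSX, hcut], ?_⟩
    · rintro S' ⟨hne', Y, rfl⟩ hsub
      exact hmin _ ⟨hne', Subtype.val ⁻¹' Y, hcut2 Y⟩ hsub
    · intro f hf
      exact hdir f ⟨fun hm => hf.1 ((stmt5_mem_val_image X (D.tail f) (hv f).1).mpr hm),
        (stmt5_mem_val_image X (D.head f) (hv f).2).mp hf.2⟩
  exact hJ S hbond

end Stmt5Cases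
lemma stmt5_contract (D : MultiDigraph) (e : D.E) (hd : D.HasOddDijoin) :
    (D.contract {e}).HasOddDijoin := by
  classical
  obtain ⟨J, hJ⟩ := hd
  refine ⟨{f | f.1 ∈ J}, ?_⟩
  rintro S' ⟨⟨-, hmin⟩, hne, Xb, hSX, hdir⟩
  set s : Setoid D.V := Relation.EqvGen.setoid (D.touchRel {e}) with hs
  set X : Set D.V := {v | Quotient.mk s v ∈ Xb} with hXdef
  have hq : (Quotient.mk s (D.tail e) : Quotient s) = Quotient.mk s (D.head e) :=
    Quot.sound (Relation.EqvGen.rel _ _ ⟨e, Set.mem_singleton e, rfl, rfl⟩)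
  have he : D.tail e ∈ X ↔ D.head e ∈ X := by
    simp only [hXdef, Set.mem_setOf_eq, hq]
  have hcorr : ∀ f : (D.contract {e}).E,
      f ∈ (D.contract {e}).cutAt Xb ↔ f.1 ∈ D.cutAt X := fun f => Iff.rfl
  have heS : e ∉ D.cutAt X := by
    intro hmem
    rcases hmem with ⟨h1, h2⟩ | ⟨h1, h2⟩
    · exact h2 (he.mp h1)
    · exact h1 (he.mpr h2)
  have himg : Subtype.val '' S' = D.cutAt X := by
    ext f
    constructor
    · rintro ⟨g, hg, rfl⟩
      exact (hcorr g).mp (hSX ▸ hg)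
    · intro hf
      have hfe : f ≠ e := fun h => heS (h ▸ hf)
      refine ⟨⟨f, by simpa using hfe⟩, ?_, rfl⟩
      rw [hSX]
      exact (hcorr _).mpr hf
  obtain ⟨g0, hg0⟩ := hne
  have hg0' : g0.1 ∈ D.cutAt X := (hcorr g0).mp (hSX ▸ hg0)
  have hbond : D.IsDirectedBond (D.cutAt X) := by
    refine ⟨⟨⟨⟨g0.1, hg0'⟩, X, rfl⟩, ?_⟩, ⟨g0.1, hg0'⟩, X, rfl, ?_⟩
    · rintro S2 ⟨hne', Y, rfl⟩ hsub
      have heY : e ∉ D.cutAt Y := fun h => heS (hsub h)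
      have hYe : D.tail e ∈ Y ↔ D.head e ∈ Y := by
        by_contra hcon
        exact heY ((stmt5_mem_cut_iff D e Y).mpr hcon)
      set Yb : Set (D.contract {e}).V := Quotient.mk s '' Y with hYb
      have hYmem : ∀ w : D.V, ((Quotient.mk s w : Quotient s) ∈ Yb ↔ w ∈ Y) := by
        intro w
        constructor
        · rintro ⟨y, hy, hyw⟩
          have hg : Relation.EqvGen (D.touchRel {e}) y w := Quotient.exact hyw
          exact (stmt5_contract_saturated D e Y hYe hg).mp hy
        · exact fun h => ⟨w, h, rfl⟩
      have hcorrY : ∀ f : (D.contract {e}).E,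
          f ∈ (D.contract {e}).cutAt Yb ↔ f.1 ∈ D.cutAt Y := by
        intro f
        simp only [MultiDigraph.cutAt, Set.mem_setOf_eq]
        rw [show ((D.contract {e}).tail f ∈ Yb) ↔ D.tail f.1 ∈ Y from hYmem (D.tail f.1),
          show ((D.contract {e}).head f ∈ Yb) ↔ D.head f.1 ∈ Y from hYmem (D.head f.1)]
      obtain ⟨f0, hf0⟩ := hne'
      have hf0e : f0 ≠ e := fun h => heY (h ▸ hf0)
      have heq := hmin ((D.contract {e}).cutAt Yb)
        ⟨⟨⟨f0, by simpa using hf0e⟩, (hcorrY _).mpr hf0⟩, Yb, rfl⟩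
        (fun g hg => by rw [hSX]; exact (hcorr g).mpr (hsub ((hcorrY g).mp hg)))
      ext f
      constructor
      · exact fun hf => hsub hf
      · intro hf
        have hfe : f ≠ e := fun h => heS (h ▸ hf)
        have : (⟨f, by simpa using hfe⟩ : (D.contract {e}).E) ∈ (D.contract {e}).cutAt Yb := by
          rw [heq, hSX]
          exact (hcorr _).mpr hf
        exact (hcorrY _).mp this
    · intro f hf
      by_cases hfe : f = e
      · subst hfe
        exact hf.1 (he.mpr hf.2)
      · exact hdir ⟨f, by simpa using hfe⟩ hf
  have hkey : (({f : (D.contract {e}).E | f.1 ∈ J}) ∩ S').ncard = (J ∩ D.cutAt X).ncard := by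
    erw [← himg, stmt5_ncard_inter_image]
    rfl
  rw [hkey]
  exact hJ _ hbond
lemma stmt5_delEdge (D : MultiDigraph) (e : D.E) (hdel : D.Deletable e)
    (hd : D.HasOddDijoin) : (D.deleteEdge e).HasOddDijoin := by
  classical
  obtain ⟨J, hJ⟩ := hd
  obtain ⟨hloop, hpath⟩ := hdel
  obtain ⟨T, heT, hT⟩ := stmt5_exists_parity_set D e hpath
  set K : Set D.E := if e ∈ J then symmDiff J T else J with hK
  refine ⟨{f | f.1 ∈ K}, ?_⟩
  rintro Sb ⟨⟨-, hmin⟩, hne, X, hSX, hdir⟩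
  have hcorr : ∀ (Y : Set D.V) (f : (D.deleteEdge e).E),
      f ∈ (D.deleteEdge e).cutAt Y ↔ f.1 ∈ D.cutAt Y := fun Y f => Iff.rfl
  have himg : ∀ Y : Set D.V,
      Subtype.val '' ((D.deleteEdge e).cutAt Y) = D.cutAt Y \ {e} := by
    intro Y
    ext f
    constructor
    · rintro ⟨g, hg, rfl⟩
      exact ⟨(hcorr Y g).mp hg, by simpa using g.2⟩
    · rintro ⟨hf, hfe⟩
      exact ⟨⟨f, by simpa using hfe⟩, (hcorr Y _).mpr hf, rfl⟩
  -- no cut of D equals {e}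
  have hno : ∀ Y : Set D.V, D.cutAt Y ≠ {e} := by
    intro Y hY
    have he' : e ∈ D.cutAt Y := hY ▸ Set.mem_singleton e
    have hodd : Odd ((T ∩ D.cutAt Y).ncard) := (hT Y).mpr ((stmt5_mem_cut_iff D e Y).mp he')
    rw [hY] at hodd
    have hTe : T ∩ {e} = ∅ := by
      ext x
      simp only [Set.mem_inter_iff, Set.mem_singleton_iff, Set.mem_empty_iff_false, iff_false,
        not_and]
      rintro hx rfl
      exact heT hx
    rw [hTe] at hodd
    simp at hodd
  -- e does not enter X
  have hAe : ¬ (D.tail e ∉ X ∧ D.head e ∈ X) := by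
    rintro ⟨h1, h2⟩
    obtain ⟨f, hfe, hf1, hf2⟩ := stmt5_enter_of_walk D e X hpath h1 h2
    exact hdir ⟨f, hfe⟩ ⟨hf1, hf2⟩
  obtain ⟨g0, hg0⟩ := hne
  have hg0' : g0.1 ∈ D.cutAt X := (hcorr X g0).mp (hSX ▸ hg0)
  have hSimg : Subtype.val '' Sb = D.cutAt X \ {e} := by erw [hSX, himg]
  have hbond : D.IsDirectedBond (D.cutAt X) := by
    refine ⟨⟨⟨⟨g0.1, hg0'⟩, X, rfl⟩, ?_⟩, ⟨g0.1, hg0'⟩, X, rfl, ?_⟩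
    · rintro S2 ⟨hne', Y, rfl⟩ hsub
      by_cases heS' : e ∈ D.cutAt Y
      · by_contra hne2
        have hssub : D.cutAt Y ⊂ D.cutAt X := ⟨hsub, fun h => hne2 (subset_antisymm hsub h)⟩
        obtain ⟨f1, hf1, hf1'⟩ := Set.exists_of_ssubset hssub
        have hdiff : D.cutAt X \ D.cutAt Y = D.cutAt (symmDiff X Y) := by
          erw [stmt5_cutAt_symmDiff]
          ext x
          simp only [Set.mem_diff, Set.mem_symmDiff]
          constructor
          · rintro ⟨hx1, hx2⟩
            exact Or.inl ⟨hx1, hx2⟩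
          · rintro (⟨hx1, hx2⟩ | ⟨hx1, hx2⟩)
            · exact ⟨hx1, hx2⟩
            · exact absurd (hsub hx1) hx2
        have heD : e ∉ D.cutAt (symmDiff X Y) := by
          rw [← hdiff]
          rintro ⟨-, h2⟩
          exact h2 heS'
        have hfe1 : f1 ≠ e := fun h => hf1' (h ▸ heS')
        have hmem1 : f1 ∈ D.cutAt (symmDiff X Y) := by
          rw [← hdiff]; exact ⟨hf1, hf1'⟩
        have hsub2 : (D.deleteEdge e).cutAt (symmDiff X Y) ⊆ Sb := by
          intro g hg
          have hg' : g.1 ∈ D.cutAt (symmDiff X Y) := (hcorr _ g).mp hg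
          rw [← hdiff] at hg'
          rw [hSX]
          exact (hcorr X g).mpr hg'.1
        have heq := hmin _ ⟨⟨⟨f1, hfe1⟩, (hcorr _ _).mpr hmem1⟩, _, rfl⟩ hsub2
        have himgeq : D.cutAt (symmDiff X Y) \ {e} = D.cutAt X \ {e} := by
          erw [← himg, ← himg, heq, hSX]
        have h1 : D.cutAt (symmDiff X Y) = D.cutAt X \ {e} := by
          rw [← himgeq]
          ext x
          simp only [Set.mem_diff, Set.mem_singleton_iff]
          exact ⟨fun h => ⟨h, fun hx => heD (hx ▸ h)⟩, fun h => h.1⟩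
        refine hno Y ?_
        ext x
        simp only [Set.mem_singleton_iff]
        constructor
        · intro hx
          by_contra hxe
          have hxX : x ∈ D.cutAt X := hsub hx
          have hxs : x ∈ D.cutAt (symmDiff X Y) := h1 ▸ (⟨hxX, hxe⟩ : _ ∧ _)
          rw [← hdiff] at hxs
          exact hxs.2 hx
        · rintro rfl
          exact heS'
      · obtain ⟨f1, hf1⟩ := hne'
        have hfe1 : f1 ≠ e := fun h => heS' (h ▸ hf1)
        have hsub2 : (D.deleteEdge e).cutAt Y ⊆ Sb := by
          intro g hg
          rw [hSX]
          exact (hcorr X g).mpr (hsub ((hcorr Y g).mp hg))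
        have heq := hmin _ ⟨⟨⟨f1, hfe1⟩, (hcorr _ _).mpr hf1⟩, _, rfl⟩ hsub2
        have himgeq : D.cutAt Y \ {e} = D.cutAt X \ {e} := by
          erw [← himg, ← himg, heq, hSX]
        have hYeq : D.cutAt Y = D.cutAt X \ {e} := by
          rw [← himgeq]
          ext x
          simp only [Set.mem_diff, Set.mem_singleton_iff]
          exact ⟨fun h => ⟨h, fun hx => heS' (hx ▸ h)⟩, fun h => h.1⟩
        by_cases heX : e ∈ D.cutAt X
        · exfalso
          apply hno (symmDiff X Y)
          erw [stmt5_cutAt_symmDiff, hYeq]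
          ext x
          simp only [Set.mem_symmDiff, Set.mem_diff, Set.mem_singleton_iff]
          constructor
          · rintro (⟨hx1, hx2⟩ | ⟨⟨hx1, hx2⟩, hx3⟩)
            · by_contra hxe
              exact hx2 ⟨hx1, hxe⟩
            · exact absurd hx1 hx3
          · rintro rfl
            exact Or.inl ⟨heX, fun h => h.2 rfl⟩
        · rw [hYeq]
          ext x
          simp only [Set.mem_diff, Set.mem_singleton_iff]
          exact ⟨fun h => h.1, fun h => ⟨h, fun hx => heX (hx ▸ h)⟩⟩
    · intro f hf
      by_cases hfe : f = e
      · subst hfe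
        exact hAe hf
      · exact hdir ⟨f, hfe⟩ hf
  have hodd : Odd ((J ∩ D.cutAt X).ncard) := hJ _ hbond
  have hkey : (({f : (D.deleteEdge e).E | f.1 ∈ K}) ∩ Sb).ncard
      = (K ∩ (D.cutAt X \ {e})).ncard := by
    erw [← hSimg, stmt5_ncard_inter_image]
    rfl
  rw [hkey]
  have hsplit : K ∩ (D.cutAt X \ {e}) = (K ∩ D.cutAt X) \ {e} := by
    ext x
    simp only [Set.mem_inter_iff, Set.mem_diff]
    tauto
  rw [hsplit]
  by_cases heJ : e ∈ J
  · have hKval : K = symmDiff J T := by rw [hK, if_pos heJ]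
    have hdist : K ∩ D.cutAt X = symmDiff (J ∩ D.cutAt X) (T ∩ D.cutAt X) := by
      rw [hKval]
      ext x
      simp only [Set.mem_symmDiff, Set.mem_inter_iff]
      tauto
    by_cases heX : e ∈ D.cutAt X
    · have hTodd : Odd ((T ∩ D.cutAt X).ncard) := (hT X).mpr ((stmt5_mem_cut_iff D e X).mp heX)
      have heven : ¬ Odd ((K ∩ D.cutAt X).ncard) := by
        rw [hdist, stmt5_odd_ncard_symmDiff]
        exact not_not_intro (iff_of_true hodd hTodd)
      have heK : e ∈ K ∩ D.cutAt X :=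
        ⟨by rw [hKval]; exact Set.mem_symmDiff.mpr (Or.inl ⟨heJ, heT⟩), heX⟩
      have hone : ((K ∩ D.cutAt X) \ {e}).ncard + 1 = (K ∩ D.cutAt X).ncard :=
        Set.ncard_diff_singleton_add_one heK (Set.toFinite _)
      rw [Nat.odd_iff] at heven ⊢
      omega
    · have hdiffid : (K ∩ D.cutAt X) \ {e} = K ∩ D.cutAt X := by
        ext x
        simp only [Set.mem_diff, Set.mem_inter_iff, Set.mem_singleton_iff]
        exact ⟨fun h => h.1, fun h => ⟨h, fun hx => heX (hx ▸ h.2)⟩⟩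
      have hcr : D.tail e ∈ X ↔ D.head e ∈ X :=
        not_not.mp (fun h => heX ((stmt5_mem_cut_iff D e X).mpr h))
      have hTeven : ¬ Odd ((T ∩ D.cutAt X).ncard) := by
        rw [hT X]
        exact not_not_intro hcr
      rw [hdiffid, hdist, stmt5_odd_ncard_symmDiff]
      exact fun hiff => hTeven (hiff.mp hodd)
  · have hKval : K = J := by rw [hK, if_neg heJ]
    have hdiffid : (K ∩ D.cutAt X) \ {e} = K ∩ D.cutAt X := by
      ext x
      simp only [Set.mem_diff, Set.mem_inter_iff, Set.mem_singleton_iff]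
      refine ⟨fun h => h.1, fun h => ⟨h, fun hx => heJ ?_⟩⟩
      rw [← hx, ← hKval]
      exact h.1
    rw [hdiffid, hKval]
    exact hodd
lemma stmt5_step {A B : MultiDigraph} (h : CutMinorStep A B) (hd : B.HasOddDijoin) :
    A.HasOddDijoin := by
  match h, hd with
  | .contractEdge D e, hd => exact stmt5_contract D e hd
  | .delEdge D e hdel, hd => exact stmt5_delEdge D e hdel hd
  | .delVertex D v hv, hd => exact stmt5_delVertex D v hv hd

-- STATEMENT 5
theorem stmt5 (D₁ D₂ : MultiDigraph) (h : IsCutMinor D₁ D₂) (hd : D₂.HasOddDijoin) :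
    D₁.HasOddDijoin := by
  revert hd
  induction h with
  | refl => exact fun hd => hd
  | tail h' step ih => exact fun hd => ih (stmt5_step step hd)
end

section
/- Let D be a weakly connected acyclic digraph with underlying multigraph G. Then the cut space of G admits a basis 𝓑 whose elements are the edge sets of minimal directed cuts of D. Moreover, if A ⊆ E(D) is a set of edges such that D/A is acyclic and G[A] is a forest, then 𝓑 can be chosen so that every edge e ∈ A appears in exactly one cut of 𝓑. -/
open Relation

/-! ### Auxiliary development -/

namespace MDAux

open MultiDigraph

/-- One undirected step along an edge of `B`. -/
def usym (D : MultiDigraph) (B : Set D.E) : D.V → D.V → Prop :=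
  fun x y => ∃ e ∈ B, (D.tail e = x ∧ D.head e = y) ∨ (D.tail e = y ∧ D.head e = x)

/-- Weak component of `x` in the subgraph spanned by `B`. -/
def comp (D : MultiDigraph) (B : Set D.E) (x : D.V) : Set D.V :=
  {y | Relation.ReflTransGen (usym D B) x y}

variable {D : MultiDigraph}

lemma usym_symm {B : Set D.E} {x y : D.V} (h : usym D B x y) : usym D B y x := by
  obtain ⟨e, he, h | h⟩ := h
  · exact ⟨e, he, Or.inr h⟩
  · exact ⟨e, he, Or.inl h⟩

lemma comp_refl {B : Set D.E} {x : D.V} : x ∈ comp D B x := Relation.ReflTransGen.refl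

lemma mem_comp_symm {B : Set D.E} {x y : D.V} (h : y ∈ comp D B x) : x ∈ comp D B y := by
  induction h with
  | refl => exact comp_refl
  | tail _ h2 ih =>
    exact Relation.ReflTransGen.trans (Relation.ReflTransGen.single (usym_symm h2)) ih

lemma comp_trans {B : Set D.E} {x y z : D.V} (h : y ∈ comp D B x) (h' : z ∈ comp D B y) :
    z ∈ comp D B x := Relation.ReflTransGen.trans h h'

lemma comp_eq_of_mem {B : Set D.E} {x y : D.V} (h : y ∈ comp D B x) :
    comp D B x = comp D B y := by
  ext z
  exact ⟨fun hz => comp_trans (mem_comp_symm h) hz, fun hz => comp_trans h hz⟩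

lemma comp_mono {B B' : Set D.E} (hBB : B ⊆ B') (x : D.V) : comp D B x ⊆ comp D B' x := by
  intro y hy
  exact Relation.ReflTransGen.mono (r := usym D B) (p := usym D B')
    (by intro u v h; obtain ⟨e, he, hc⟩ := h; exact ⟨e, hBB he, hc⟩) x y hy

lemma head_mem_comp {B : Set D.E} {x : D.V} {e : D.E} (he : e ∈ B)
    (h : D.tail e ∈ comp D B x) : D.head e ∈ comp D B x :=
  h.tail ⟨e, he, Or.inl ⟨rfl, rfl⟩⟩

lemma tail_mem_comp {B : Set D.E} {x : D.V} {e : D.E} (he : e ∈ B)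
    (h : D.head e ∈ comp D B x) : D.tail e ∈ comp D B x :=
  h.tail ⟨e, he, Or.inr ⟨rfl, rfl⟩⟩

/-- Removing an edge `b` : where vertices of a component can end up. -/
lemma comp_cases {B : Set D.E} {b : D.E} {x y : D.V} (h : y ∈ comp D B x) :
    y ∈ comp D (B \ {b}) x ∨
      (D.tail b ∈ comp D (B \ {b}) x ∧ y ∈ comp D (B \ {b}) (D.head b)) ∨
      (D.head b ∈ comp D (B \ {b}) x ∧ y ∈ comp D (B \ {b}) (D.tail b)) := by
  induction h with
  | refl => exact Or.inl comp_refl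
  | @tail y' y _ h2 ih =>
    obtain ⟨e, heB, hc⟩ := h2
    by_cases heb : e = b
    · subst heb
      rcases hc with ⟨ht, hh⟩ | ⟨ht, hh⟩
      · -- tail e = y', head e = y
        subst ht; subst hh
        rcases ih with h1 | ⟨h1, h2'⟩ | ⟨h1, h2'⟩
        · exact Or.inr (Or.inl ⟨h1, comp_refl⟩)
        · exact Or.inr (Or.inl ⟨h1, comp_refl⟩)
        · exact Or.inl h1
      · -- tail e = y, head e = y'
        subst ht; subst hh
        rcases ih with h1 | ⟨h1, h2'⟩ | ⟨h1, h2'⟩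
        · exact Or.inr (Or.inr ⟨h1, comp_refl⟩)
        · exact Or.inl h1
        · exact Or.inr (Or.inr ⟨h1, comp_refl⟩)
    · have hstep : usym D (B \ {b}) y' y := ⟨e, ⟨heB, heb⟩, hc⟩
      rcases ih with h1 | ⟨h1, h2'⟩ | ⟨h1, h2'⟩
      · exact Or.inl (h1.tail hstep)
      · exact Or.inr (Or.inl ⟨h1, h2'.tail hstep⟩)
      · exact Or.inr (Or.inr ⟨h1, h2'.tail hstep⟩)

/-- If neither endpoint of `b` lies in the reduced component, removing `b` changes nothing. -/
lemma comp_diff_eq {B : Set D.E} {b : D.E} {x : D.V}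
    (ht : D.tail b ∉ comp D (B \ {b}) x) (hh : D.head b ∉ comp D (B \ {b}) x) :
    comp D B x = comp D (B \ {b}) x := by
  apply Set.Subset.antisymm
  · intro y hy
    rcases comp_cases (b := b) hy with h1 | ⟨h1, _⟩ | ⟨h1, _⟩
    · exact h1
    · exact absurd h1 ht
    · exact absurd h1 hh
  · exact comp_mono Set.diff_subset x

lemma comp_split_union {B : Set D.E} {b : D.E} (hb : b ∈ B) :
    comp D B (D.tail b) =
      comp D (B \ {b}) (D.tail b) ∪ comp D (B \ {b}) (D.head b) := by
  apply Set.Subset.antisymm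
  · intro y hy
    rcases comp_cases (b := b) hy with h1 | ⟨_, h2⟩ | ⟨_, h2⟩
    · exact Or.inl h1
    · exact Or.inr h2
    · exact Or.inl h2
  · rintro y (hy | hy)
    · exact comp_mono Set.diff_subset _ hy
    · exact comp_trans (head_mem_comp hb comp_refl) (comp_mono Set.diff_subset _ hy)

lemma comp_split_disjoint {B : Set D.E} {b : D.E}
    (hf : D.head b ∉ comp D (B \ {b}) (D.tail b)) :
    Disjoint (comp D (B \ {b}) (D.tail b)) (comp D (B \ {b}) (D.head b)) := by
  rw [Set.disjoint_left]
  intro z hz1 hz2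
  exact hf (comp_trans hz1 (mem_comp_symm hz2))

end MDAux

namespace MDAux

lemma eind_apply {α : Type} (C : Set α) (x : α) [Decidable (x ∈ C)] :
    eindicator C x = if x ∈ C then 1 else 0 := by
  simp [eindicator, Set.indicator_apply]

lemma eind_of_mem {α : Type} {C : Set α} {x : α} (h : x ∈ C) : eindicator C x = 1 := by
  classical
  rw [eind_apply, if_pos h]

lemma eind_of_not_mem {α : Type} {C : Set α} {x : α} (h : x ∉ C) : eindicator C x = 0 := by
  classical
  rw [eind_apply, if_neg h]

lemma eind_inj {α : Type} : Function.Injective (eindicator (α := α)) := by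
  intro C C' h
  ext x
  constructor
  · intro hx
    by_contra hx'
    have := congrFun h x
    rw [eind_of_mem hx, eind_of_not_mem hx'] at this
    exact one_ne_zero this
  · intro hx
    by_contra hx'
    have := congrFun h x
    rw [eind_of_not_mem hx', eind_of_mem hx] at this
    exact one_ne_zero this.symm

lemma eind_union {α : Type} {C₁ C₂ : Set α} (h : Disjoint C₁ C₂) :
    eindicator (C₁ ∪ C₂) = eindicator C₁ + eindicator C₂ := by
  classical
  funext x
  by_cases h1 : x ∈ C₁
  · have h2 : x ∉ C₂ := Set.disjoint_left.mp h h1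
    simp [Pi.add_apply, eind_of_mem (Set.mem_union_left _ h1), eind_of_mem h1,
      eind_of_not_mem h2]
  · by_cases h2 : x ∈ C₂
    · simp [Pi.add_apply, eind_of_mem (Set.mem_union_right _ h2), eind_of_not_mem h1,
        eind_of_mem h2]
    · have : x ∉ C₁ ∪ C₂ := fun hc => hc.elim h1 h2
      simp [Pi.add_apply, eind_of_not_mem this, eind_of_not_mem h1, eind_of_not_mem h2]

/-- In characteristic 2, one part of a disjoint union is the sum of the union and the
other part. -/
lemma eind_union_right {α : Type} {C₁ C₂ : Set α} (h : Disjoint C₁ C₂) :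
    eindicator C₂ = eindicator (C₁ ∪ C₂) + eindicator C₁ := by
  classical
  funext x
  show _ = eindicator (C₁ ∪ C₂) x + eindicator C₁ x
  by_cases h1 : x ∈ C₁
  · rw [eind_of_not_mem (Set.disjoint_left.mp h h1), eind_of_mem (Set.mem_union_left _ h1),
      eind_of_mem h1]
    decide
  · by_cases h2 : x ∈ C₂
    · rw [eind_of_mem h2, eind_of_mem (Set.mem_union_right _ h2), eind_of_not_mem h1]
      decide
    · rw [eind_of_not_mem h2, eind_of_not_mem (fun hc => hc.elim h1 h2), eind_of_not_mem h1]
      decide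

lemma eind_singleton {α : Type} [DecidableEq α] (v : α) :
    eindicator ({v} : Set α) = Pi.single v 1 := by
  funext x
  by_cases h : x = v
  · subst h; simp [eind_of_mem, Pi.single_apply]
  · simp [eind_of_not_mem (by simpa using h : x ∉ ({v} : Set α)), Pi.single_apply, h]

variable {D : MultiDigraph}

/-- The `𝔽₂` incidence map sending a vertex-set indicator to the indicator of its cut. -/
noncomputable def incid (D : MultiDigraph) : (D.V → ZMod 2) →ₗ[ZMod 2] (D.E → ZMod 2) where
  toFun y := fun e => y (D.tail e) + y (D.head e)
  map_add' y z := by funext e; simp [Pi.add_apply]; ring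
  map_smul' c y := by funext e; simp [Pi.smul_apply]; ring

lemma incid_eind (X : Set D.V) : incid D (eindicator X) = eindicator (D.cutAt X) := by
  classical
  funext e
  show eindicator X (D.tail e) + eindicator X (D.head e) = _
  by_cases ht : D.tail e ∈ X <;> by_cases hh : D.head e ∈ X
  · rw [eind_of_mem ht, eind_of_mem hh,
      eind_of_not_mem (by simp [MultiDigraph.cutAt, ht, hh])]
    decide
  · rw [eind_of_mem ht, eind_of_not_mem hh,
      eind_of_mem (by simp [MultiDigraph.cutAt, ht, hh])]
    decide
  · rw [eind_of_not_mem ht, eind_of_mem hh,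
      eind_of_mem (by simp [MultiDigraph.cutAt, ht, hh])]
    decide
  · rw [eind_of_not_mem ht, eind_of_not_mem hh,
      eind_of_not_mem (by simp [MultiDigraph.cutAt, ht, hh])]
    decide

end MDAux

namespace MDAux

variable {D : MultiDigraph}

/-- `X` is closed: no edge of `D` enters `X`. -/
def ClosedSet (D : MultiDigraph) (X : Set D.V) : Prop :=
  ∀ e : D.E, ¬(D.tail e ∉ X ∧ D.head e ∈ X)

lemma mem_cutAt {X : Set D.V} {e : D.E} :
    e ∈ D.cutAt X ↔ (D.tail e ∈ X ∧ D.head e ∉ X) ∨ (D.tail e ∉ X ∧ D.head e ∈ X) :=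
  Iff.rfl

lemma cutAt_compl (X : Set D.V) : D.cutAt Xᶜ = D.cutAt X := by
  ext e
  simp only [mem_cutAt, Set.mem_compl_iff, not_not]
  tauto

lemma closed_tail_mem {X : Set D.V} (hX : ClosedSet D X) {e : D.E} (he : e ∈ D.cutAt X) :
    D.tail e ∈ X ∧ D.head e ∉ X := by
  rcases he with h | h
  · exact h
  · exact absurd h (hX e)

lemma closed_not_mem_of_tail {X : Set D.V} (hX : ClosedSet D X) {e : D.E}
    (h : D.tail e ∉ X) : D.head e ∉ X := fun hh => hX e ⟨h, hh⟩

/-- An edge set that is a disjoint union of directed bonds (with its indicator in their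
span). -/
def Good (D : MultiDigraph) (S : Set D.E) : Prop :=
  ∃ 𝒞 : Set (Set D.E), (∀ B ∈ 𝒞, D.IsDirectedBond B) ∧
    (∀ B₁ ∈ 𝒞, ∀ B₂ ∈ 𝒞, B₁ ≠ B₂ → Disjoint B₁ B₂) ∧ ⋃₀ 𝒞 = S ∧
    eindicator S ∈ Submodule.span (ZMod 2) (eindicator '' 𝒞)

lemma good_union {S₁ S₂ : Set D.E} (h1 : Good D S₁) (h2 : Good D S₂)
    (hd : Disjoint S₁ S₂) : Good D (S₁ ∪ S₂) := by
  obtain ⟨𝒞₁, hb1, hp1, hu1, hs1⟩ := h1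
  obtain ⟨𝒞₂, hb2, hp2, hu2, hs2⟩ := h2
  refine ⟨𝒞₁ ∪ 𝒞₂, ?_, ?_, ?_, ?_⟩
  · rintro B (hB | hB)
    · exact hb1 B hB
    · exact hb2 B hB
  · rintro B₁ (hB₁ | hB₁) B₂ (hB₂ | hB₂) hne
    · exact hp1 B₁ hB₁ B₂ hB₂ hne
    · exact hd.mono (hu1 ▸ Set.subset_sUnion_of_mem hB₁) (hu2 ▸ Set.subset_sUnion_of_mem hB₂)
    · exact (hd.symm).mono (hu2 ▸ Set.subset_sUnion_of_mem hB₁)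
        (hu1 ▸ Set.subset_sUnion_of_mem hB₂)
    · exact hp2 B₁ hB₁ B₂ hB₂ hne
  · rw [Set.sUnion_union, hu1, hu2]
  · rw [eind_union hd, Set.image_union]
    exact Submodule.add_mem _
      (Submodule.span_mono Set.subset_union_left hs1)
      (Submodule.span_mono Set.subset_union_right hs2)

section PropAux
variable (a b c d : Prop)

lemma aux_char1 (h3 : ¬(¬a ∧ b)) (h1 : a → b → (c ↔ d)) (h2 : ¬a → ¬b → (c ↔ d)) :
    ((a ∧ c) ∧ ¬(b ∧ d)) ∨ (¬(a ∧ c) ∧ (b ∧ d)) ↔ ((a ∧ ¬b) ∨ (¬a ∧ b)) ∧ c := by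
  tauto

lemma aux_char2 (h3 : ¬(¬a ∧ b)) (h1 : a → b → (c ↔ d)) (h2 : ¬a → ¬b → (c ↔ d)) :
    ((a ∧ ¬c) ∧ ¬(b ∧ ¬d)) ∨ (¬(a ∧ ¬c) ∧ (b ∧ ¬d)) ↔ ((a ∧ ¬b) ∨ (¬a ∧ b)) ∧ ¬c := by
  tauto

lemma aux_char3 (h3 : ¬(¬a ∧ b)) (h1 : a → b → (c ↔ d)) (h2 : ¬a → ¬b → (c ↔ d)) :
    ((¬a ∧ c) ∧ ¬(¬b ∧ d)) ∨ (¬(¬a ∧ c) ∧ (¬b ∧ d)) ↔ ((a ∧ ¬b) ∨ (¬a ∧ b)) ∧ d := by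
  tauto

lemma aux_char4 (h3 : ¬(¬a ∧ b)) (h1 : a → b → (c ↔ d)) (h2 : ¬a → ¬b → (c ↔ d)) :
    ((¬a ∧ ¬c) ∧ ¬(¬b ∧ ¬d)) ∨ (¬(¬a ∧ ¬c) ∧ (¬b ∧ ¬d)) ↔ ((a ∧ ¬b) ∨ (¬a ∧ b)) ∧ ¬d := by
  tauto

end PropAux

/-- Every nonempty directed cut is a disjoint union of directed bonds. -/
lemma decomp : ∀ (n : ℕ) (X : Set D.V), ClosedSet D X → (D.cutAt X).Nonempty →
    (D.cutAt X).ncard ≤ n → Good D (D.cutAt X) := by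
  intro n
  induction n with
  | zero =>
    intro X _ hne hcard
    rw [Nat.le_zero, Set.ncard_eq_zero (Set.toFinite _)] at hcard
    rw [hcard] at hne
    exact absurd hne (by simp)
  | succ n IH =>
    intro X hX hne hcard
    by_cases hbond : D.IsBond (D.cutAt X)
    · refine ⟨{D.cutAt X}, ?_, ?_, Set.sUnion_singleton _, ?_⟩
      · rintro B rfl
        exact ⟨hbond, hne, X, rfl, hX⟩
      · rintro B₁ rfl B₂ rfl hne'
        exact absurd rfl hne'
      · exact Submodule.subset_span ⟨_, rfl, rfl⟩
    · -- the cut is not a bond: find a proper subcut and split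
      have hcut : D.IsCut (D.cutAt X) := ⟨hne, X, rfl⟩
      rw [MultiDigraph.IsBond, not_and] at hbond
      have := hbond hcut
      push_neg at this
      obtain ⟨S', hS'cut, hS'sub, hS'ne⟩ := this
      obtain ⟨hS'nonempty, Y, rfl⟩ := hS'cut
      -- structural facts
      have fact1 : ∀ e : D.E, D.tail e ∈ X → D.head e ∈ X →
          (D.tail e ∈ Y ↔ D.head e ∈ Y) := by
        intro e ht hh
        by_contra hiff
        have : e ∈ D.cutAt Y := by
          rw [mem_cutAt]; tauto
        rcases (closed_tail_mem hX (hS'sub this)) with ⟨_, hh'⟩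
        exact hh' hh
      have fact2 : ∀ e : D.E, D.tail e ∉ X → D.head e ∉ X →
          (D.tail e ∈ Y ↔ D.head e ∈ Y) := by
        intro e ht hh
        by_contra hiff
        have : e ∈ D.cutAt Y := by
          rw [mem_cutAt]; tauto
        rcases (closed_tail_mem hX (hS'sub this)) with ⟨ht', _⟩
        exact ht ht'
      -- characterizations of the four pieces
      have charP1 : D.cutAt (X ∩ Y) = {e | e ∈ D.cutAt X ∧ D.tail e ∈ Y} := by
        ext e
        have := aux_char1 (D.tail e ∈ X) (D.head e ∈ X) (D.tail e ∈ Y) (D.head e ∈ Y)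
          (hX e) (fact1 e) (fact2 e)
        simpa only [mem_cutAt, Set.mem_inter_iff, Set.mem_setOf_eq] using this
      have charP2 : D.cutAt (X \ Y) = {e | e ∈ D.cutAt X ∧ D.tail e ∉ Y} := by
        ext e
        have := aux_char2 (D.tail e ∈ X) (D.head e ∈ X) (D.tail e ∈ Y) (D.head e ∈ Y)
          (hX e) (fact1 e) (fact2 e)
        simpa only [mem_cutAt, Set.mem_diff, Set.mem_setOf_eq] using this
      have charQ1 : D.cutAt (Xᶜ ∩ Y) = {e | e ∈ D.cutAt X ∧ D.head e ∈ Y} := by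
        ext e
        have := aux_char3 (D.tail e ∈ X) (D.head e ∈ X) (D.tail e ∈ Y) (D.head e ∈ Y)
          (hX e) (fact1 e) (fact2 e)
        simpa only [mem_cutAt, Set.mem_inter_iff, Set.mem_compl_iff, Set.mem_setOf_eq] using this
      have charQ2 : D.cutAt (Xᶜ \ Y) = {e | e ∈ D.cutAt X ∧ D.head e ∉ Y} := by
        ext e
        have := aux_char4 (D.tail e ∈ X) (D.head e ∈ X) (D.tail e ∈ Y) (D.head e ∈ Y)
          (hX e) (fact1 e) (fact2 e)
        simpa only [mem_cutAt, Set.mem_diff, Set.mem_compl_iff, Set.mem_setOf_eq] using this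
      -- closedness of the four pieces
      have hcP1 : ClosedSet D (X ∩ Y) := by
        rintro e ⟨ht, hh⟩
        have htX : D.tail e ∈ X := by
          by_contra htX; exact hX e ⟨htX, hh.1⟩
        exact ht ⟨htX, (fact1 e htX hh.1).mpr hh.2⟩
      have hcP2 : ClosedSet D (X \ Y) := by
        rintro e ⟨ht, hh⟩
        have htX : D.tail e ∈ X := by
          by_contra htX; exact hX e ⟨htX, hh.1⟩
        exact ht ⟨htX, fun hty => hh.2 ((fact1 e htX hh.1).mp hty)⟩
      have hcQ1 : ClosedSet D ((Xᶜ ∩ Y)ᶜ) := by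
        rintro e ⟨ht, hh⟩
        rw [Set.mem_compl_iff, not_not] at ht
        have hhX : D.head e ∉ X := closed_not_mem_of_tail hX ht.1
        exact hh ⟨hhX, (fact2 e ht.1 hhX).mp ht.2⟩
      have hcQ2 : ClosedSet D ((Xᶜ \ Y)ᶜ) := by
        rintro e ⟨ht, hh⟩
        rw [Set.mem_compl_iff, not_not] at ht
        have hhX : D.head e ∉ X := closed_not_mem_of_tail hX ht.1
        exact hh ⟨hhX, fun hhy => ht.2 ((fact2 e ht.1 hhX).mpr hhy)⟩
      -- the two candidate partitions
      have hPunion : D.cutAt (X ∩ Y) ∪ D.cutAt (X \ Y) = D.cutAt X := by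
        rw [charP1, charP2]
        ext e
        simp only [Set.mem_union, Set.mem_setOf_eq]
        constructor
        · rintro (⟨h, _⟩ | ⟨h, _⟩) <;> exact h
        · intro h
          by_cases hty : D.tail e ∈ Y
          · exact Or.inl ⟨h, hty⟩
          · exact Or.inr ⟨h, hty⟩
      have hPdisj : Disjoint (D.cutAt (X ∩ Y)) (D.cutAt (X \ Y)) := by
        rw [charP1, charP2, Set.disjoint_left]
        rintro e ⟨_, h⟩ ⟨_, h'⟩
        exact h' h
      have hQunion : D.cutAt ((Xᶜ ∩ Y)ᶜ) ∪ D.cutAt ((Xᶜ \ Y)ᶜ) = D.cutAt X := by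
        rw [cutAt_compl, cutAt_compl, charQ1, charQ2]
        ext e
        simp only [Set.mem_union, Set.mem_setOf_eq]
        constructor
        · rintro (⟨h, _⟩ | ⟨h, _⟩) <;> exact h
        · intro h
          by_cases hhy : D.head e ∈ Y
          · exact Or.inl ⟨h, hhy⟩
          · exact Or.inr ⟨h, hhy⟩
      have hQdisj : Disjoint (D.cutAt ((Xᶜ ∩ Y)ᶜ)) (D.cutAt ((Xᶜ \ Y)ᶜ)) := by
        rw [cutAt_compl, cutAt_compl, charQ1, charQ2, Set.disjoint_left]
        rintro e ⟨_, h⟩ ⟨_, h'⟩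
        exact h' h
      -- recursion principle for a split
      have key : ∀ X1 X2 : Set D.V, ClosedSet D X1 → ClosedSet D X2 →
          D.cutAt X1 ∪ D.cutAt X2 = D.cutAt X → Disjoint (D.cutAt X1) (D.cutAt X2) →
          (D.cutAt X1).Nonempty → (D.cutAt X2).Nonempty → Good D (D.cutAt X) := by
        intro X1 X2 hc1 hc2 hu hd hne1 hne2
        have hlt : ∀ Z : Set D.E, Z ⊆ D.cutAt X → (D.cutAt X \ Z).Nonempty → Z.ncard ≤ n := by
          intro Z hZ hZne
          have hss : Z ⊂ D.cutAt X := by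
            constructor
            · exact hZ
            · intro hsup
              obtain ⟨e, heS, heZ⟩ := hZne
              exact heZ (hsup heS)
          have := Set.ncard_lt_ncard hss (Set.toFinite _)
          omega
        have h1le : (D.cutAt X1).ncard ≤ n := by
          refine hlt _ (by rw [← hu]; exact Set.subset_union_left) ?_
          obtain ⟨e, he⟩ := hne2
          exact ⟨e, by rw [← hu]; exact Or.inr he, fun hc => (Set.disjoint_left.mp hd hc) he⟩
        have h2le : (D.cutAt X2).ncard ≤ n := by
          refine hlt _ (by rw [← hu]; exact Set.subset_union_right) ?_
          obtain ⟨e, he⟩ := hne1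
          exact ⟨e, by rw [← hu]; exact Or.inl he, fun hc => (Set.disjoint_left.mp hd he) hc⟩
        have g := good_union (IH X1 hc1 hne1 h1le) (IH X2 hc2 hne2 h2le) hd
        rwa [hu] at g
      -- nonemptiness dichotomy
      obtain ⟨e0, he0⟩ := hS'nonempty
      have he0X : e0 ∈ D.cutAt X := hS'sub he0
      have hne1 : ¬ D.cutAt X ⊆ D.cutAt Y := fun h => hS'ne (Set.Subset.antisymm hS'sub h)
      obtain ⟨e1, he1S, he1n⟩ := Set.not_subset.mp hne1
      have he1iff : D.tail e1 ∈ Y ↔ D.head e1 ∈ Y := by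
        rw [mem_cutAt] at he1n
        tauto
      rcases (mem_cutAt.mp he0) with ⟨ht0, hh0⟩ | ⟨ht0, hh0⟩
      · -- tail e0 ∈ Y, head e0 ∉ Y
        by_cases hty1 : D.tail e1 ∈ Y
        · -- head split
          have hhy1 : D.head e1 ∈ Y := he1iff.mp hty1
          refine key _ _ hcQ1 hcQ2 hQunion hQdisj ?_ ?_
          · rw [cutAt_compl, charQ1]
            exact ⟨e1, he1S, hhy1⟩
          · rw [cutAt_compl, charQ2]
            exact ⟨e0, he0X, hh0⟩
        · -- tail split
          refine key _ _ hcP1 hcP2 hPunion hPdisj ?_ ?_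
          · rw [charP1]
            exact ⟨e0, he0X, ht0⟩
          · rw [charP2]
            exact ⟨e1, he1S, hty1⟩
      · -- tail e0 ∉ Y, head e0 ∈ Y
        by_cases hty1 : D.tail e1 ∈ Y
        · -- tail split
          refine key _ _ hcP1 hcP2 hPunion hPdisj ?_ ?_
          · rw [charP1]
            exact ⟨e1, he1S, hty1⟩
          · rw [charP2]
            exact ⟨e0, he0X, ht0⟩
        · -- head split
          have hhy1 : D.head e1 ∉ Y := fun h => hty1 (he1iff.mpr h)
          refine key _ _ hcQ1 hcQ2 hQunion hQdisj ?_ ?_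
          · rw [cutAt_compl, charQ1]
            exact ⟨e0, he0X, hh0⟩
          · rw [cutAt_compl, charQ2]
            exact ⟨e1, he1S, hhy1⟩

/-- Decomposition of a nonempty directed cut. -/
lemma decomp' (X : Set D.V) (hX : ClosedSet D X) (hne : (D.cutAt X).Nonempty) :
    Good D (D.cutAt X) :=
  decomp (D.cutAt X).ncard X hX hne le_rfl

end MDAux

namespace MDAux

variable {D : MultiDigraph}

lemma eind_union_left {α : Type} {C₁ C₂ : Set α} (h : Disjoint C₁ C₂) :
    eindicator C₁ = eindicator (C₁ ∪ C₂) + eindicator C₂ := by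
  rw [Set.union_comm]
  exact eind_union_right h.symm

lemma comp_empty (x : D.V) : comp D (∅ : Set D.E) x = {x} := by
  apply Set.Subset.antisymm
  · intro y hy
    induction hy with
    | refl => rfl
    | tail _ h2 ih => exact absurd h2 (by rintro ⟨e, he, _⟩; exact he)
  · rintro y rfl
    exact comp_refl

/-- Generators for the vertex space: components and split components. -/
def Gens (D : MultiDigraph) (A : Set D.E) : Set (D.V → ZMod 2) :=
  {x | ∃ v : D.V, x = eindicator (comp D A v)} ∪
    {x | ∃ a ∈ A, x = eindicator (comp D (A \ {a}) (D.tail a))}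

lemma gen1_mem (A : Set D.E) (v : D.V) : eindicator (comp D A v) ∈ Gens D A :=
  Or.inl ⟨v, rfl⟩

lemma gen2_mem {A : Set D.E} {a : D.E} (ha : a ∈ A) :
    eindicator (comp D (A \ {a}) (D.tail a)) ∈ Gens D A :=
  Or.inr ⟨a, ha, rfl⟩

/-- Key splitting identity for the class of `tail b` upon removing `b` from `A`. -/
lemma split_eind {A : Set D.E} {b : D.E} (hb : b ∈ A)
    (hf : D.head b ∉ comp D (A \ {b}) (D.tail b)) :
    eindicator (comp D (A \ {b}) (D.head b)) =
      eindicator (comp D A (D.tail b)) + eindicator (comp D (A \ {b}) (D.tail b)) := by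
  rw [comp_split_union hb]
  exact eind_union_right (comp_split_disjoint hf)

lemma split_eind' {A : Set D.E} {b : D.E} (hb : b ∈ A)
    (hf : D.head b ∉ comp D (A \ {b}) (D.tail b)) :
    eindicator (comp D (A \ {b}) (D.tail b)) =
      eindicator (comp D A (D.tail b)) + eindicator (comp D (A \ {b}) (D.head b)) := by
  rw [comp_split_union hb]
  exact eind_union_left (comp_split_disjoint hf)

/-- The core spanning lemma: indicator vectors of singletons lie in the span of the
generators, provided `A` spans no cycle (in the weak sense recorded by `hf`). -/
lemma core : ∀ (n : ℕ) (A : Set D.E), A.ncard ≤ n →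
    (∀ a ∈ A, D.head a ∉ comp D (A \ {a}) (D.tail a)) →
    ∀ v : D.V, eindicator ({v} : Set D.V) ∈ Submodule.span (ZMod 2) (Gens D A) := by
  intro n
  induction n with
  | zero =>
    intro A hA _ v
    rw [Nat.le_zero, Set.ncard_eq_zero (Set.toFinite _)] at hA
    subst hA
    exact Submodule.subset_span (by rw [← comp_empty (D := D) v]; exact gen1_mem _ v)
  | succ n IH =>
    intro A hA hf v
    rcases Set.eq_empty_or_nonempty A with rfl | ⟨b, hb⟩
    · exact Submodule.subset_span (by rw [← comp_empty (D := D) v]; exact gen1_mem _ v)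
    have hA' : (A \ {b}).ncard ≤ n := by
      have h1 := Set.ncard_sdiff_singleton_of_mem hb
      have h2 : 0 < A.ncard := (Set.ncard_pos (Set.toFinite _)).mpr ⟨b, hb⟩
      omega
    have hf' : ∀ a ∈ A \ {b}, D.head a ∉ comp D ((A \ {b}) \ {a}) (D.tail a) := by
      intro a ha hmem
      exact hf a ha.1 (comp_mono (by intro x hx; exact ⟨hx.1.1, hx.2⟩) _ hmem)
    have hfb : D.head b ∉ comp D (A \ {b}) (D.tail b) := hf b hb
    have hsub : Gens D (A \ {b}) ⊆ ↑(Submodule.span (ZMod 2) (Gens D A)) := by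
      rintro x (⟨v', rfl⟩ | ⟨a, ha, rfl⟩)
      · -- a component of A \ {b}
        by_cases h1 : D.tail b ∈ comp D (A \ {b}) v'
        · rw [comp_eq_of_mem h1]
          exact Submodule.subset_span (gen2_mem hb)
        by_cases h2 : D.head b ∈ comp D (A \ {b}) v'
        · rw [comp_eq_of_mem h2, split_eind hb hfb]
          exact Submodule.add_mem _ (Submodule.subset_span (gen1_mem _ _))
            (Submodule.subset_span (gen2_mem hb))
        · rw [← comp_diff_eq h1 h2]
          exact Submodule.subset_span (gen1_mem _ _)
      · -- a split component of A \ {b}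
        have hab : a ≠ b := fun h => ha.2 h
        have hbB : b ∈ A \ {a} := ⟨hb, fun h => hab (Set.mem_singleton_iff.mp h).symm⟩
        have hcomm : (A \ {b}) \ {a} = (A \ {a}) \ {b} := Set.diff_diff_comm
        rw [hcomm]
        have hfb' : D.head b ∉ comp D ((A \ {a}) \ {b}) (D.tail b) :=
          fun hmem => hfb (comp_mono (by intro x hx; exact ⟨hx.1.1, hx.2⟩) _ hmem)
        have hdisj := comp_split_disjoint (B := A \ {a}) (b := b) hfb'
        have hfa : D.head a ∉ comp D (A \ {a}) (D.tail a) := hf a ha.1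
        by_cases h1 : D.tail b ∈ comp D ((A \ {a}) \ {b}) (D.tail a)
        · -- the split component is the tail-side of b
          rw [comp_eq_of_mem h1]
          have he2 : comp D (A \ {a}) (D.tail a) = comp D (A \ {a}) (D.tail b) :=
            comp_eq_of_mem (comp_mono Set.diff_subset _ h1)
          have htbhb : comp D (A \ {a}) (D.tail b) = comp D (A \ {a}) (D.head b) :=
            comp_eq_of_mem (head_mem_comp hbB comp_refl)
          have hta1 : D.tail a ∈ comp D ((A \ {a}) \ {b}) (D.tail b) := mem_comp_symm h1
          have he3 : comp D ((A \ {a}) \ {b}) (D.head b) = comp D (A \ {b}) (D.head b) := by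
            rw [← hcomm]
            refine (comp_diff_eq ?_ ?_).symm
            · rw [hcomm]
              exact Set.disjoint_left.mp hdisj hta1
            · rw [hcomm]
              intro hmem
              have : D.head a ∈ comp D (A \ {a}) (D.head b) :=
                comp_mono Set.diff_subset _ hmem
              rw [← htbhb, ← he2] at this
              exact hfa this
          rw [split_eind' hbB hfb', ← he2, he3, split_eind hb hfb]
          exact Submodule.add_mem _ (Submodule.subset_span (gen2_mem ha.1))
            (Submodule.add_mem _ (Submodule.subset_span (gen1_mem _ _))
              (Submodule.subset_span (gen2_mem hb)))
        by_cases h2 : D.head b ∈ comp D ((A \ {a}) \ {b}) (D.tail a)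
        · rw [comp_eq_of_mem h2]
          have hhbtb : comp D (A \ {a}) (D.head b) = comp D (A \ {a}) (D.tail b) :=
            (comp_eq_of_mem (head_mem_comp hbB comp_refl)).symm
          have he2 : comp D (A \ {a}) (D.tail a) = comp D (A \ {a}) (D.tail b) :=
            (comp_eq_of_mem (comp_mono Set.diff_subset _ h2)).trans hhbtb
          have hta2 : D.tail a ∈ comp D ((A \ {a}) \ {b}) (D.head b) := mem_comp_symm h2
          have he3 : comp D ((A \ {a}) \ {b}) (D.tail b) = comp D (A \ {b}) (D.tail b) := by
            rw [← hcomm]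
            refine (comp_diff_eq ?_ ?_).symm
            · rw [hcomm]
              exact Set.disjoint_left.mp hdisj.symm hta2
            · rw [hcomm]
              intro hmem
              have : D.head a ∈ comp D (A \ {a}) (D.tail b) :=
                comp_mono Set.diff_subset _ hmem
              rw [← he2] at this
              exact hfa this
          rw [split_eind hbB hfb', ← he2, he3]
          exact Submodule.add_mem _ (Submodule.subset_span (gen2_mem ha.1))
            (Submodule.subset_span (gen2_mem hb))
        · rw [← comp_diff_eq h1 h2]
          exact Submodule.subset_span (gen2_mem ha.1)
    have := IH (A \ {b}) hA' hf' v
    exact (Submodule.span_le.mpr hsub) this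

end MDAux

namespace MDAux

variable {D : MultiDigraph}

lemma mem_of_singletons {α : Type} [Fintype α] (W : Submodule (ZMod 2) (α → ZMod 2))
    (h : ∀ v : α, eindicator ({v} : Set α) ∈ W) (y : α → ZMod 2) : y ∈ W := by
  classical
  have hy : y = ∑ v : α, y v • eindicator ({v} : Set α) := by
    funext w
    rw [Finset.sum_apply, Finset.sum_eq_single w]
    · rw [Pi.smul_apply, eind_of_mem (Set.mem_singleton w), smul_eq_mul, mul_one]
    · intro v _ hv
      rw [Pi.smul_apply, eind_of_not_mem (fun hh => hv (Set.mem_singleton_iff.mp hh).symm),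
        smul_eq_mul, mul_zero]
    · intro hw
      exact absurd (Finset.mem_univ w) hw
  rw [hy]
  exact Submodule.sum_mem _ fun v _ => Submodule.smul_mem _ _ (h v)

/-! The topological rank function. -/

/-- A non-`A` directed step. -/
def dstepN (D : MultiDigraph) (A : Set D.E) : D.V → D.V → Prop :=
  fun x y => ∃ e, e ∉ A ∧ D.tail e = x ∧ D.head e = y

/-- Mixed step: undirected along `A`, directed outside `A`. -/
def mixStep (D : MultiDigraph) (A : Set D.E) : D.V → D.V → Prop :=
  fun x y => usym D A x y ∨ dstepN D A x y

def down (D : MultiDigraph) (A : Set D.E) (v : D.V) : Set D.V :=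
  {w | Relation.ReflTransGen (mixStep D A) w v}

noncomputable def fnat (D : MultiDigraph) (A : Set D.E) (v : D.V) : ℕ := (down D A v).ncard

noncomputable def kap (D : MultiDigraph) : D.V ≃ Fin (Fintype.card D.V) := Fintype.equivFin D.V

noncomputable def gnat (D : MultiDigraph) (A : Set D.E) (v : D.V) : ℕ :=
  sInf ((fun u => (kap D u).val) '' comp D A v)

noncomputable def rho (D : MultiDigraph) (A : Set D.E) (v : D.V) : ℕ :=
  fnat D A v * Fintype.card D.V + gnat D A v

lemma mix_of_comp {A : Set D.E} {v w : D.V} (h : w ∈ comp D A v) :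
    Relation.ReflTransGen (mixStep D A) v w :=
  Relation.ReflTransGen.mono (r := usym D A) (p := mixStep D A) (by intro _ _ hh; exact Or.inl hh) v w h

lemma down_eq {A : Set D.E} {v w : D.V} (h : w ∈ comp D A v) :
    down D A v = down D A w := by
  ext z
  exact ⟨fun hz => hz.trans (mix_of_comp h),
    fun hz => hz.trans (mix_of_comp (mem_comp_symm h))⟩

lemma gnat_lt (A : Set D.E) (v : D.V) : gnat D A v < Fintype.card D.V := by
  have hne : ((fun u => (kap D u).val) '' comp D A v).Nonempty :=
    ⟨(kap D v).val, v, comp_refl, rfl⟩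
  obtain ⟨u, _, hu⟩ := Nat.sInf_mem hne
  rw [gnat, ← hu]
  exact (kap D u).isLt

lemma gnat_inj {A : Set D.E} {v w : D.V} (h : gnat D A v = gnat D A w) :
    comp D A v = comp D A w := by
  have h1 : ((fun u => (kap D u).val) '' comp D A v).Nonempty :=
    ⟨(kap D v).val, v, comp_refl, rfl⟩
  have h2 : ((fun u => (kap D u).val) '' comp D A w).Nonempty :=
    ⟨(kap D w).val, w, comp_refl, rfl⟩
  obtain ⟨u, hu, hueq⟩ := Nat.sInf_mem h1
  obtain ⟨u', hu', hueq'⟩ := Nat.sInf_mem h2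
  have e1 : ((kap D u : Fin _) : ℕ) = gnat D A v := hueq
  have e2 : ((kap D u' : Fin _) : ℕ) = gnat D A w := hueq'
  have : u = u' := by
    apply (kap D).injective
    apply Fin.ext
    rw [e1, e2, h]
  rw [comp_eq_of_mem hu, comp_eq_of_mem hu', this]

lemma rho_congr {A : Set D.E} {v w : D.V} (h : w ∈ comp D A v) :
    rho D A w = rho D A v := by
  rw [rho, rho, fnat, fnat, down_eq h, gnat, gnat, comp_eq_of_mem h]

/-- Map mixed walks into the contraction. -/
noncomputable def toQ (D : MultiDigraph) (A : Set D.E) : D.V → (D.contract A).V :=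
  fun v => (Quotient.mk (EqvGen.setoid (D.touchRel A)) v : Quotient (EqvGen.setoid (D.touchRel A)))

lemma toQ_usym {A : Set D.E} {x y : D.V} (h : usym D A x y) : toQ D A x = toQ D A y := by
  obtain ⟨e, he, ⟨h1, h2⟩ | ⟨h1, h2⟩⟩ := h
  · exact Quotient.sound (EqvGen.rel x y ⟨e, he, h1, h2⟩)
  · exact Quotient.sound (EqvGen.symm _ _ (EqvGen.rel y x ⟨e, he, h1, h2⟩))

lemma toQ_dstep {A : Set D.E} {x y : D.V} (h : dstepN D A x y) :
    (D.contract A).dstep (toQ D A x) (toQ D A y) := by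
  obtain ⟨e, he, h1, h2⟩ := h
  exact ⟨⟨e, he⟩, by rw [← h1]; rfl, by rw [← h2]; rfl⟩

lemma to_contract {A : Set D.E} {x y : D.V}
    (h : Relation.ReflTransGen (mixStep D A) x y) :
    Relation.ReflTransGen (D.contract A).dstep (toQ D A x) (toQ D A y) := by
  induction h with
  | refl => exact Relation.ReflTransGen.refl
  | tail _ h2 ih =>
    rcases h2 with h2 | h2
    · rw [← toQ_usym h2]; exact ih
    · exact ih.tail (toQ_dstep h2)

lemma rho_lt {A : Set D.E} (hacy : (D.contract A).Acyclic) {e : D.E} (he : e ∉ A) :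
    rho D A (D.tail e) < rho D A (D.head e) := by
  have hsub : down D A (D.tail e) ⊆ down D A (D.head e) := by
    intro z hz
    exact hz.tail (Or.inr ⟨e, he, rfl, rfl⟩)
  have hmem : D.head e ∈ down D A (D.head e) := Relation.ReflTransGen.refl
  have hnmem : D.head e ∉ down D A (D.tail e) := by
    intro hR
    exact hacy _ _ (toQ_dstep ⟨e, he, rfl, rfl⟩) (to_contract hR)
  have hflt : fnat D A (D.tail e) < fnat D A (D.head e) :=
    Set.ncard_lt_ncard ⟨hsub, fun hsup => hnmem (hsup hmem)⟩ (Set.toFinite _)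
  have hg := gnat_lt (D := D) A (D.tail e)
  calc rho D A (D.tail e) < fnat D A (D.tail e) * Fintype.card D.V + Fintype.card D.V := by
        rw [rho]; omega
    _ = (fnat D A (D.tail e) + 1) * Fintype.card D.V := by ring
    _ ≤ fnat D A (D.head e) * Fintype.card D.V := Nat.mul_le_mul_right _ hflt
    _ ≤ rho D A (D.head e) := Nat.le_add_right _ _

lemma comp_of_rho_eq {A : Set D.E} {v w : D.V} (h : rho D A v = rho D A w) :
    comp D A v = comp D A w := by
  have hgv := gnat_lt (D := D) A v
  have hgw := gnat_lt (D := D) A w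
  apply gnat_inj
  have h1 : gnat D A v = rho D A v % Fintype.card D.V := by
    rw [rho, Nat.add_comm, Nat.add_mul_mod_self_right, Nat.mod_eq_of_lt hgv]
  have h2 : gnat D A w = rho D A w % Fintype.card D.V := by
    rw [rho, Nat.add_comm, Nat.add_mul_mod_self_right, Nat.mod_eq_of_lt hgw]
  rw [h1, h2, h]

lemma level_eq_comp (A : Set D.E) (v : D.V) :
    {w | rho D A w = rho D A v} = comp D A v := by
  ext w
  constructor
  · intro hw
    have := comp_of_rho_eq (A := A) hw
    rw [← this]
    exact comp_refl
  · intro hw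
    exact rho_congr hw

end MDAux

namespace MDAux

variable {D : MultiDigraph}

def Lset (D : MultiDigraph) (A : Set D.E) (t : ℕ) : Set D.V := {v | rho D A v < t}

def Xset (D : MultiDigraph) (A : Set D.E) (a : D.E) : Set D.V :=
  Lset D A (rho D A (D.tail a)) ∪ comp D (A \ {a}) (D.tail a)

lemma rho_head_eq {A : Set D.E} {e : D.E} (he : e ∈ A) :
    rho D A (D.head e) = rho D A (D.tail e) :=
  rho_congr (head_mem_comp he comp_refl)

lemma closed_L {A : Set D.E} (hacy : (D.contract A).Acyclic) (t : ℕ) :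
    ClosedSet D (Lset D A t) := by
  rintro e ⟨ht, hh⟩
  by_cases he : e ∈ A
  · exact ht (by rw [Lset, Set.mem_setOf_eq, ← rho_head_eq he]; exact hh)
  · exact ht (lt_trans (rho_lt hacy he) hh)

lemma mem_comp_rho {A : Set D.E} {a : D.E} {w : D.V}
    (hw : w ∈ comp D (A \ {a}) (D.tail a)) : rho D A w = rho D A (D.tail a) :=
  rho_congr (comp_mono Set.diff_subset _ hw)

lemma closed_X {A : Set D.E} (hacy : (D.contract A).Acyclic) {a : D.E} (ha : a ∈ A) :
    ClosedSet D (Xset D A a) := by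
  rintro e ⟨ht, hh⟩
  rcases hh with hh | hh
  · -- head in the low part
    by_cases he : e ∈ A
    · exact ht (Or.inl (by rw [Lset, Set.mem_setOf_eq, ← rho_head_eq he]; exact hh))
    · exact ht (Or.inl (lt_trans (rho_lt hacy he) hh))
  · -- head in the component part
    have hrh : rho D A (D.head e) = rho D A (D.tail a) := mem_comp_rho hh
    by_cases he : e ∈ A
    · by_cases hea : e = a
      · subst hea
        exact ht (Or.inr comp_refl)
      · exact ht (Or.inr (tail_mem_comp ⟨he, hea⟩ hh))
    · exact ht (Or.inl (by rw [Lset, Set.mem_setOf_eq, ← hrh]; exact rho_lt hacy he))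

lemma mem_cut_X {A : Set D.E} {a : D.E} (ha : a ∈ A)
    (hf : D.head a ∉ comp D (A \ {a}) (D.tail a)) : a ∈ D.cutAt (Xset D A a) := by
  refine Or.inl ⟨Or.inr comp_refl, ?_⟩
  rintro (hh | hh)
  · rw [Lset, Set.mem_setOf_eq, rho_head_eq ha] at hh
    exact lt_irrefl _ hh
  · exact hf hh

lemma cutX_inter_A {A : Set D.E} {a : D.E} (ha : a ∈ A) :
    ∀ b ∈ A, b ∈ D.cutAt (Xset D A a) → b = a := by
  intro b hb hcut
  by_contra hne
  have hba : b ∈ A \ {a} := ⟨hb, hne⟩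
  rcases hcut with ⟨htb, hhb⟩ | ⟨htb, hhb⟩
  · rcases htb with htb | htb
    · exact hhb (Or.inl (by rw [Lset, Set.mem_setOf_eq, rho_head_eq hb]; exact htb))
    · exact hhb (Or.inr (head_mem_comp hba htb))
  · rcases hhb with hhb | hhb
    · exact htb (Or.inl (by rw [Lset, Set.mem_setOf_eq, ← rho_head_eq hb]; exact hhb))
    · exact htb (Or.inr (tail_mem_comp hba hhb))

lemma cutL_A_free {A : Set D.E} {t : ℕ} {b : D.E} (hb : b ∈ A) :
    b ∉ D.cutAt (Lset D A t) := by
  rintro (⟨h1, h2⟩ | ⟨h1, h2⟩)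
  · exact h2 (by rw [Lset, Set.mem_setOf_eq, rho_head_eq hb]; exact h1)
  · exact h1 (by rw [Lset, Set.mem_setOf_eq, ← rho_head_eq hb]; exact h2)

lemma eind_comp_L (A : Set D.E) (v : D.V) :
    eindicator (comp D A v) =
      eindicator (Lset D A (rho D A v + 1)) + eindicator (Lset D A (rho D A v)) := by
  funext w
  have hmem : w ∈ comp D A v ↔ rho D A w = rho D A v := by
    rw [← level_eq_comp A v]; rfl
  show _ = eindicator _ w + eindicator _ w
  by_cases h1 : rho D A w < rho D A v
  · rw [eind_of_not_mem (fun hc => (lt_irrefl _ (hmem.mp hc ▸ h1))),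
      eind_of_mem (show w ∈ Lset D A _ from Nat.lt_succ_of_lt h1),
      eind_of_mem (show w ∈ Lset D A _ from h1)]
    decide
  by_cases h2 : rho D A w = rho D A v
  · rw [eind_of_mem (hmem.mpr h2),
      eind_of_mem (show w ∈ Lset D A _ from by rw [Lset, Set.mem_setOf_eq, h2]; omega),
      eind_of_not_mem (show w ∉ Lset D A _ from by rw [Lset, Set.mem_setOf_eq, h2]; omega)]
    decide
  · rw [eind_of_not_mem (fun hc => h2 (hmem.mp hc)),
      eind_of_not_mem (show w ∉ Lset D A _ from by rw [Lset, Set.mem_setOf_eq]; omega),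
      eind_of_not_mem (show w ∉ Lset D A _ from by rw [Lset, Set.mem_setOf_eq]; omega)]
    decide

lemma eind_comp_X {A : Set D.E} {a : D.E} :
    eindicator (comp D (A \ {a}) (D.tail a)) =
      eindicator (Xset D A a) + eindicator (Lset D A (rho D A (D.tail a))) := by
  have hdisj : Disjoint (Lset D A (rho D A (D.tail a))) (comp D (A \ {a}) (D.tail a)) := by
    rw [Set.disjoint_left]
    intro w hw hw'
    rw [Lset, Set.mem_setOf_eq, mem_comp_rho hw'] at hw
    exact lt_irrefl _ hw
  exact eind_union_right hdisj

end MDAux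

namespace MDAux

variable {D : MultiDigraph}

/-- Generators on the vertex side. -/
def VGens (D : MultiDigraph) (A : Set D.E) : Set (D.V → ZMod 2) :=
  {x | ∃ t, x = eindicator (Lset D A t)} ∪ {x | ∃ a ∈ A, x = eindicator (Xset D A a)}

set_option maxHeartbeats 2000000 in
theorem main (D : MultiDigraph) (A : Set D.E) (hacy : (D.contract A).Acyclic)
    (hf : ∀ a ∈ A, D.head a ∉ comp D (A \ {a}) (D.tail a)) :
    ∃ ℬ : Set (Set D.E), D.IsCutSpaceBasis ℬ ∧ (∀ S ∈ ℬ, D.IsDirectedBond S) ∧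
      ∀ e ∈ A, ∃! S : Set D.E, S ∈ ℬ ∧ e ∈ S := by
  classical
  -- the family of cuts to decompose
  set 𝒮 : Set (Set D.E) := {S | ((∃ t, S = D.cutAt (Lset D A t)) ∨
    (∃ a ∈ A, S = D.cutAt (Xset D A a))) ∧ S.Nonempty} with h𝒮
  have hdec : ∀ S ∈ 𝒮, Good D S := by
    rintro S ⟨hform, hne⟩
    rcases hform with ⟨t, rfl⟩ | ⟨a, ha, rfl⟩
    · exact decomp' _ (closed_L hacy t) hne
    · exact decomp' _ (closed_X hacy ha) hne
  choose 𝒞 h𝒞 using hdec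
  -- the spanning set of directed bonds
  set ℬ₀ : Set (Set D.E) := {B | ∃ S, ∃ hS : S ∈ 𝒮, B ∈ 𝒞 S hS} with hℬ₀
  have hbond : ∀ B ∈ ℬ₀, D.IsDirectedBond B := by
    rintro B ⟨S, hS, hB⟩
    exact (h𝒞 S hS).1 B hB
  set T : Set (D.E → ZMod 2) := eindicator '' ℬ₀ with hT
  have hspanS : ∀ S, ∀ hS : S ∈ 𝒮, eindicator S ∈ Submodule.span (ZMod 2) T := by
    intro S hS
    refine Submodule.span_mono (Set.image_mono ?_) (h𝒞 S hS).2.2.2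
    intro B hB
    exact ⟨S, hS, hB⟩
  -- every cut's indicator lies in the span of T
  have hXne : ∀ a ∈ A, (D.cutAt (Xset D A a)).Nonempty := fun a ha => ⟨a, mem_cut_X ha (hf a ha)⟩
  have hcutspan : ∀ Y : Set D.V, eindicator (D.cutAt Y) ∈ Submodule.span (ZMod 2) T := by
    intro Y
    have hGens : Gens D A ⊆ ↑(Submodule.span (ZMod 2) (VGens D A)) := by
      rintro x (⟨v, rfl⟩ | ⟨a, ha, rfl⟩)
      · rw [eind_comp_L A v]
        exact Submodule.add_mem _
          (Submodule.subset_span (Or.inl ⟨rho D A v + 1, rfl⟩))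
          (Submodule.subset_span (Or.inl ⟨rho D A v, rfl⟩))
      · rw [eind_comp_X]
        exact Submodule.add_mem _
          (Submodule.subset_span (Or.inr ⟨a, ha, rfl⟩))
          (Submodule.subset_span (Or.inl ⟨rho D A (D.tail a), rfl⟩))
    have hy : eindicator Y ∈ Submodule.span (ZMod 2) (VGens D A) := by
      refine mem_of_singletons _ (fun v => ?_) _
      exact Submodule.span_le.mpr hGens (core A.ncard A le_rfl hf v)
    have hmap : eindicator (D.cutAt Y) ∈
        Submodule.span (ZMod 2) (⇑(incid D) '' VGens D A) := by
      rw [Submodule.span_image]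
      exact ⟨eindicator Y, hy, incid_eind Y⟩
    refine Submodule.span_le.mpr ?_ hmap
    rintro x ⟨y, hyV, rfl⟩
    rcases hyV with ⟨t, rfl⟩ | ⟨a, ha, rfl⟩
    · rw [incid_eind]
      by_cases hne : (D.cutAt (Lset D A t)).Nonempty
      · exact hspanS _ ⟨Or.inl ⟨t, rfl⟩, hne⟩
      · rw [Set.not_nonempty_iff_eq_empty] at hne
        rw [hne]
        have : eindicator (∅ : Set D.E) = 0 := by
          funext e
          rw [eind_of_not_mem (Set.notMem_empty e)]
          rfl
        rw [this]
        exact Submodule.zero_mem _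
    · rw [incid_eind]
      exact hspanS _ ⟨Or.inr ⟨a, ha, rfl⟩, hXne a ha⟩
  -- the distinguished bonds containing the edges of A
  have hSX : ∀ a ∈ A, D.cutAt (Xset D A a) ∈ 𝒮 :=
    fun a ha => ⟨Or.inr ⟨a, ha, rfl⟩, hXne a ha⟩
  have hBa : ∀ a, ∀ ha : a ∈ A, ∃ B, B ∈ 𝒞 _ (hSX a ha) ∧ a ∈ B := by
    intro a ha
    have : a ∈ ⋃₀ 𝒞 _ (hSX a ha) := by
      rw [(h𝒞 _ (hSX a ha)).2.2.1]
      exact mem_cut_X ha (hf a ha)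
    obtain ⟨B, hB, haB⟩ := this
    exact ⟨B, hB, haB⟩
  choose! Ba hBa1 hBa2 using hBa
  have hBaℬ₀ : ∀ a ∈ A, Ba a ∈ ℬ₀ := fun a ha => ⟨_, hSX a ha, hBa1 a ha⟩
  -- uniqueness of the bond containing a given edge of A
  have hUniq : ∀ a ∈ A, ∀ B ∈ ℬ₀, a ∈ B → B = Ba a := by
    rintro a ha B ⟨S, hS, hB⟩ haB
    have haS : a ∈ S := by
      rw [← (h𝒞 S hS).2.2.1]
      exact Set.subset_sUnion_of_mem hB haB
    have hS2 := hS
    obtain ⟨hform, hSne⟩ := hS2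
    rcases hform with ⟨t, ht⟩ | ⟨a', ha', hX⟩
    · rw [ht] at haS
      exact absurd haS (cutL_A_free ha)
    · have haa : a = a' := by
        rw [hX] at haS
        exact cutX_inter_A ha' a ha haS
      subst haa
      subst hX
      by_contra hne
      have hdisj := (h𝒞 _ hS).2.1 B hB (Ba a) (hBa1 a ha) hne
      exact Set.disjoint_left.mp hdisj haB (hBa2 a ha)
  -- linear independence of the distinguished bonds
  haveI : Fintype ↥A := Fintype.ofFinite _
  have hmemiff : ∀ (i j : ↥A), (i : D.E) ∈ Ba (j : D.E) ↔ i = j := by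
    intro i j
    constructor
    · intro hmem
      have h1 : (i : D.E) ∈ D.cutAt (Xset D A (j : D.E)) := by
        rw [← (h𝒞 _ (hSX _ j.2)).2.2.1]
        exact Set.subset_sUnion_of_mem (hBa1 _ j.2) hmem
      exact Subtype.ext (cutX_inter_A j.2 _ i.2 h1)
    · rintro rfl
      exact hBa2 _ i.2
  have hli : LinearIndependent (ZMod 2) (fun i : ↥A => eindicator (Ba (i : D.E))) := by
    rw [Fintype.linearIndependent_iff]
    intro g hg i
    have := congrFun hg (i : D.E)
    rw [Finset.sum_apply] at this
    rw [Finset.sum_eq_single i] at this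
    · rw [Pi.smul_apply, eind_of_mem ((hmemiff i i).mpr rfl), smul_eq_mul, mul_one] at this
      simpa using this
    · intro j _ hji
      rw [Pi.smul_apply, eind_of_not_mem (fun hc => hji ((hmemiff i j).mp hc).symm),
        smul_eq_mul, mul_zero]
    · intro hc
      exact absurd (Finset.mem_univ i) hc
  have hli' : LinearIndependent (ZMod 2)
      ((↑) : Set.range (fun i : ↥A => eindicator (Ba (i : D.E))) → (D.E → ZMod 2)) :=
    (linearIndepOn_id_range_iff hli.injective).mpr hli
  have hst : Set.range (fun i : ↥A => eindicator (Ba (i : D.E))) ⊆ T := by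
    rintro x ⟨i, rfl⟩
    exact ⟨Ba (i : D.E), hBaℬ₀ _ i.2, rfl⟩
  obtain ⟨bset, hbT, hsb, hTspan, hbli⟩ := exists_linearIndepOn_id_extension (s := Set.range (fun i : ↥A => eindicator (Ba (i : D.E)))) hli' hst
  -- the final basis
  set ℬ : Set (Set D.E) := {S | S ∈ ℬ₀ ∧ eindicator S ∈ bset} with hℬdef
  have himg : eindicator '' ℬ = bset := by
    apply Set.Subset.antisymm
    · rintro x ⟨S, hS, rfl⟩
      exact hS.2
    · intro x hx
      obtain ⟨S, hS, rfl⟩ := hbT hx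
      exact ⟨S, ⟨hS, hx⟩, rfl⟩
  have hspan_eq : Submodule.span (ZMod 2) bset = Submodule.span (ZMod 2) T := by
    apply le_antisymm
    · exact Submodule.span_mono hbT
    · exact Submodule.span_le.mpr hTspan
  refine ⟨ℬ, ⟨?_, ?_⟩, ?_, ?_⟩
  · -- linear independence
    have hg : ∀ S : ℬ, eindicator (S : Set D.E) ∈ bset := fun S => S.2.2
    have hinj : Function.Injective (fun S : ℬ => (⟨eindicator (S : Set D.E), hg S⟩ : bset)) := by
      intro S S' hSS
      have := congrArg Subtype.val hSS
      exact Subtype.ext (eind_inj this)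
    exact hbli.comp _ hinj
  · -- span equals the cut space
    rw [himg, hspan_eq]
    apply le_antisymm
    · apply Submodule.span_le.mpr
      rintro x ⟨S, hS, rfl⟩
      exact Submodule.subset_span ⟨S, (hbond S hS).1, rfl⟩
    · apply Submodule.span_le.mpr
      rintro x ⟨S, hS, rfl⟩
      obtain ⟨hne', Y, hY⟩ := hS.1
      rw [hY]
      exact hcutspan Y
  · -- all members are directed bonds
    intro S hS
    exact hbond S hS.1
  · -- uniqueness for edges of A
    intro e he
    refine ⟨Ba e, ⟨⟨hBaℬ₀ e he, hsb ⟨⟨e, he⟩, rfl⟩⟩, hBa2 e he⟩, ?_⟩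
    rintro S ⟨hSℬ, heS⟩
    exact hUniq e he S hSℬ.1 heS

end MDAux

namespace MDAux

variable {D : MultiDigraph}

/-- A walk in the subgraph spanned by `B`, recording vertices and edges. -/
inductive EPath (D : MultiDigraph) (B : Set D.E) : D.V → D.V → List D.V → List D.E → Prop
  | nil (x : D.V) : EPath D B x x [x] []
  | cons {x y z : D.V} {l : List D.V} {m : List D.E} {e : D.E} (he : e ∈ B)
      (hc : (D.tail e = x ∧ D.head e = y) ∨ (D.tail e = y ∧ D.head e = x))
      (p : EPath D B y z l m) : EPath D B x z (x :: l) (e :: m)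

lemma comp_to_epath {B : Set D.E} {x y : D.V} (h : y ∈ comp D B x) :
    ∃ l m, EPath D B x y l m := by
  induction h using Relation.ReflTransGen.head_induction_on with
  | refl => exact ⟨[y], [], EPath.nil y⟩
  | head h' _ ih =>
    obtain ⟨l, m, p⟩ := ih
    obtain ⟨e, he, hc⟩ := h'
    exact ⟨_, _, EPath.cons he hc p⟩

lemma epath_suffix {B : Set D.E} : ∀ {y z : D.V} {l : List D.V} {m : List D.E},
    EPath D B y z l m → ∀ w ∈ l, ∃ t mt, EPath D B w z (w :: t) mt ∧ (w :: t).Sublist l := by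
  intro y z l m p
  induction p with
  | nil x =>
    intro w hw
    rw [List.mem_singleton] at hw
    subst hw
    exact ⟨[], [], EPath.nil w, List.Sublist.refl _⟩
  | @cons x y' z' l' m' e he hc p ih =>
    intro w hw
    rcases List.mem_cons.mp hw with rfl | hw
    · exact ⟨l', e :: m', EPath.cons he hc p, List.Sublist.refl _⟩
    · obtain ⟨t, mt, p', hsub⟩ := ih w hw
      exact ⟨t, mt, p', hsub.cons x⟩

lemma epath_dedup {B : Set D.E} : ∀ (n : ℕ) {x z : D.V} {l : List D.V} {m : List D.E},
    l.length ≤ n → EPath D B x z l m →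
    ∃ l' m', EPath D B x z l' m' ∧ l'.Nodup ∧ ∀ v ∈ l', v ∈ l := by
  intro n
  induction n with
  | zero =>
    intro x z l m hlen p
    cases p <;> simp at hlen
  | succ n IH =>
    intro x z l m hlen p
    cases p with
    | nil =>
      exact ⟨[x], [], EPath.nil x, List.nodup_singleton x, fun v hv => hv⟩
    | @cons _ y _ l0 m0 e he hc p0 =>
      by_cases hx : x ∈ l0
      · obtain ⟨t, mt, px, hsub⟩ := epath_suffix p0 x hx
        have hlen' : (x :: t).length ≤ n := by
          have h1 := hsub.length_le
          simp only [List.length_cons] at hlen h1 ⊢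
          omega
        obtain ⟨l', m', p', hnd, hmem⟩ := IH hlen' px
        exact ⟨l', m', p', hnd, fun v hv => List.mem_cons_of_mem x (hsub.subset (hmem v hv))⟩
      · have hlen0 : l0.length ≤ n := by
          simp only [List.length_cons] at hlen
          omega
        obtain ⟨l0', m0', p0', hnd, hmem⟩ := IH hlen0 p0
        refine ⟨x :: l0', e :: m0', EPath.cons he hc p0', ?_, ?_⟩
        · exact List.nodup_cons.mpr ⟨fun hxl => hx (hmem x hxl), hnd⟩
        · intro v hv
          rcases List.mem_cons.mp hv with rfl | hv
          · exact List.mem_cons_self (a := v) (l := l0)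
          · exact List.mem_cons_of_mem x (hmem v hv)

/-- Index-wise facts of a walk, using total (default-valued) indexing. -/
lemma epath_facts {B : Set D.E} (dV : D.V) (dE : D.E) :
    ∀ {x z : D.V} {l : List D.V} {m : List D.E}, EPath D B x z l m →
    l.length = m.length + 1 ∧ l.getD 0 dV = x ∧ l.getD m.length dV = z ∧
      ∀ i < m.length, m.getD i dE ∈ B ∧
        ((D.tail (m.getD i dE) = l.getD i dV ∧ D.head (m.getD i dE) = l.getD (i + 1) dV) ∨
          (D.tail (m.getD i dE) = l.getD (i + 1) dV ∧ D.head (m.getD i dE) = l.getD i dV)) := by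
  intro x z l m p
  induction p with
  | nil x => exact ⟨rfl, rfl, rfl, fun i hi => absurd hi (Nat.not_lt_zero i)⟩
  | @cons x y z l m e he hc p ih =>
    obtain ⟨ih1, ih2, ih3, ih4⟩ := ih
    refine ⟨by simp [ih1], rfl, by simpa using ih3, ?_⟩
    intro i hi
    rcases Nat.eq_zero_or_eq_succ_pred i with rfl | hieq
    · refine ⟨he, ?_⟩
      rw [List.getD_cons_succ, ih2]
      exact hc
    · rw [hieq]
      simp only [List.length_cons] at hi
      have hi' : i - 1 < m.length := by omega
      have := ih4 (i - 1) hi'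
      simpa using this

end MDAux

namespace MDAux

variable {D : MultiDigraph}

set_option maxHeartbeats 1000000 in
lemma forest_hf {A : Set D.E} (hA2 : D.IsForestOn A) :
    ∀ a ∈ A, D.head a ∉ comp D (A \ {a}) (D.tail a) := by
  classical
  intro a ha hmem
  apply hA2
  obtain ⟨l0, m0, p0⟩ := comp_to_epath hmem
  obtain ⟨l, m, p, hnd, -⟩ := epath_dedup l0.length le_rfl p0
  obtain ⟨hlen, h0, hz, hfacts⟩ := epath_facts (D.tail a) a p
  set k := m.length with hk
  haveI : NeZero (k + 1) := ⟨Nat.succ_ne_zero k⟩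
  set gv : ℕ → D.V := fun i => l.getD i (D.tail a) with hgv
  set ge : ℕ → D.E := fun i => m.getD i a with hge
  have hfacts' : ∀ i < k, ge i ∈ A \ {a} ∧
      ((D.tail (ge i) = gv i ∧ D.head (ge i) = gv (i + 1)) ∨
        (D.tail (ge i) = gv (i + 1) ∧ D.head (ge i) = gv i)) := hfacts
  have hgvinj : ∀ i j, i < l.length → j < l.length → gv i = gv j → i = j := by
    intro i j hi hj hij
    rw [hgv] at hij
    simp only [List.getD_eq_getElem l _ hi, List.getD_eq_getElem l _ hj] at hij
    have hinj := List.nodup_iff_injective_get.mp hnd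
    have : (⟨i, hi⟩ : Fin l.length) = ⟨j, hj⟩ := by
      apply hinj
      simpa [List.get_eq_getElem] using hij
    simpa using this
  have hvlt : ∀ i : ZMod (k + 1), i.val < l.length := by
    rw [hlen]
    exact fun i => ZMod.val_lt i
  set v : ZMod (k + 1) → D.V := fun i => gv i.val with hv
  set ed : ZMod (k + 1) → D.E := fun i => if i.val < k then ge i.val else a with hed
  set dir : ZMod (k + 1) → Bool :=
    fun i => if i.val < k then decide (D.tail (ge i.val) = gv i.val) else false with hdir
  have hvinj : Function.Injective v := by
    intro i j hij
    exact ZMod.val_injective _ (hgvinj _ _ (hvlt i) (hvlt j) hij)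
  have hsucc : ∀ i : ZMod (k + 1), (i + 1).val = (i.val + 1) % (k + 1) := by
    intro i
    rw [ZMod.val_add, ZMod.val_one_eq_one_mod]
    conv_rhs => rw [Nat.add_mod, Nat.mod_eq_of_lt (ZMod.val_lt i)]
  have hsucc_lt : ∀ i : ZMod (k + 1), i.val < k → (i + 1).val = i.val + 1 := by
    intro i h
    rw [hsucc]
    exact Nat.mod_eq_of_lt (by omega)
  have hsucc_last : ∀ i : ZMod (k + 1), i.val = k → (i + 1).val = 0 := by
    intro i h
    rw [hsucc, h, Nat.mod_self]
  have hvalk : ∀ i : ZMod (k + 1), ¬ i.val < k → i.val = k := by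
    intro i h
    have := ZMod.val_lt i
    omega
  have hgv0 : gv 0 = D.tail a := h0
  have hgvk : gv k = D.head a := hz
  have hvlast : ∀ i : ZMod (k + 1), i.val = k → v i = D.head a := by
    intro i h
    rw [hv]
    simp only []
    rw [h]
    exact hgvk
  have hvfirst : ∀ i : ZMod (k + 1), i.val = k → v (i + 1) = D.tail a := by
    intro i h
    rw [hv]
    simp only []
    rw [hsucc_last i h]
    exact hgv0
  have hvmid : ∀ i : ZMod (k + 1), i.val < k → v (i + 1) = gv (i.val + 1) := by
    intro i h
    rw [hv]
    simp only []
    rw [hsucc_lt i h]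
  -- adjacency
  have hadj : ∀ i : ZMod (k + 1),
      (dir i = true → D.tail (ed i) = v i ∧ D.head (ed i) = v (i + 1)) ∧
      (dir i = false → D.tail (ed i) = v (i + 1) ∧ D.head (ed i) = v i) := by
    intro i
    by_cases hik : i.val < k
    · have hfi := hfacts i.val hik
      have hedi : ed i = ge i.val := if_pos hik
      have hvi : v i = gv i.val := rfl
      rcases hfi.2 with ⟨h1, h2⟩ | ⟨h1, h2⟩
      · have hdi : dir i = true := by
          rw [hdir]
          simp only []
          rw [if_pos hik]
          exact decide_eq_true h1
        refine ⟨fun _ => ⟨by rw [hedi, h1, hvi], by rw [hedi, h2, hvmid i hik]⟩, fun hcon => ?_⟩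
        rw [hdi] at hcon
        exact absurd hcon (by simp)
      · have hne : D.tail (ge i.val) ≠ gv i.val := by
          rw [h1]
          intro hcc
          have h1lt : i.val + 1 < l.length := by rw [hlen]; omega
          have := hgvinj _ _ h1lt (hvlt i) hcc
          omega
        have hdi : dir i = false := by
          rw [hdir]
          simp only []
          rw [if_pos hik]
          exact decide_eq_false hne
        refine ⟨fun hcon => ?_, fun _ => ⟨by rw [hedi, h1, hvmid i hik], by rw [hedi, h2, hvi]⟩⟩
        rw [hdi] at hcon
        exact absurd hcon (by simp)
    · have hik' := hvalk i hik
      have hedi : ed i = a := if_neg hik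
      have hdi : dir i = false := if_neg hik
      refine ⟨fun hcon => ?_, fun _ => ⟨?_, ?_⟩⟩
      · rw [hdi] at hcon
        exact absurd hcon (by simp)
      · rw [hedi, hvfirst i hik']
      · rw [hedi, hvlast i hik']
  -- injectivity of the edge map
  have hedinj : Function.Injective ed := by
    intro i j hij
    by_cases hik : i.val < k <;> by_cases hjk : j.val < k
    · have hfi := (hfacts' i.val hik).2
      have hfj := (hfacts' j.val hjk).2
      rw [hed] at hij
      simp only [] at hij
      rw [if_pos hik, if_pos hjk] at hij
      rw [hij] at hfi
      have hilt : i.val + 1 < l.length := by rw [hlen]; omega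
      have hjlt : j.val + 1 < l.length := by rw [hlen]; omega
      apply ZMod.val_injective
      rcases hfi with ⟨hi1, hi2⟩ | ⟨hi1, hi2⟩ <;> rcases hfj with ⟨hj1, hj2⟩ | ⟨hj1, hj2⟩
      · exact hgvinj _ _ (hvlt i) (hvlt j) (hi1.symm.trans hj1)
      · have e1 := hgvinj _ _ (hvlt i) hjlt (hi1.symm.trans hj1)
        have e2 := hgvinj _ _ hilt (hvlt j) (hi2.symm.trans hj2)
        omega
      · have e1 := hgvinj _ _ hilt (hvlt j) (hi1.symm.trans hj1)
        have e2 := hgvinj _ _ (hvlt i) hjlt (hi2.symm.trans hj2)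
        omega
      · exact hgvinj _ _ hilt hjlt (hi1.symm.trans hj1) |> fun h => by omega
    · rw [hed] at hij
      simp only [] at hij
      rw [if_pos hik, if_neg hjk] at hij
      exact absurd (hij ▸ (hfacts' i.val hik).1).2 (by simp)
    · rw [hed] at hij
      simp only [] at hij
      rw [if_neg hik, if_pos hjk] at hij
      exact absurd (hij.symm ▸ (hfacts' j.val hjk).1).2 (by simp)
    · exact ZMod.val_injective _ (by rw [hvalk i hik, hvalk j hjk])
  -- the signed incidence vector
  set X : D.E → SignType := fun f =>
    if h : ∃ i : ZMod (k + 1), ed i = f then (if dir h.choose then 1 else -1) else 0 with hXdef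
  have hXed : ∀ i, X (ed i) = if dir i then 1 else -1 := by
    intro i
    have hex : ∃ j : ZMod (k + 1), ed j = ed i := ⟨i, rfl⟩
    rw [hXdef]
    simp only []
    rw [dif_pos hex]
    rw [hedinj hex.choose_spec]
  have hX0 : ∀ f, (∀ i : ZMod (k + 1), ed i ≠ f) → X f = 0 := by
    intro f hf
    rw [hXdef]
    simp only []
    exact dif_neg (fun ⟨i, hi⟩ => hf i hi)
  have hsupp : ∀ e, X e ≠ 0 → e ∈ A := by
    intro e hne
    by_cases hex : ∃ i : ZMod (k + 1), ed i = e
    · obtain ⟨i, rfl⟩ := hex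
      by_cases hik : i.val < k
      · have : ed i = ge i.val := if_pos hik
        rw [this]
        exact ((hfacts' i.val hik).1).1
      · have : ed i = a := if_neg hik
        rw [this]
        exact ha
    · exact absurd (hX0 e (fun i hi => hex ⟨i, hi⟩)) hne
  exact ⟨X, ⟨k + 1, Nat.succ_pos k, v, ed, dir, hvinj, hedinj, hadj, hXed, hX0⟩, hsupp⟩

end MDAux

namespace MDAux

variable {D : MultiDigraph}

lemma contract_empty_acyclic (h : D.Acyclic) : (D.contract (∅ : Set D.E)).Acyclic := by
  have hlift : ∀ x y : D.V, EqvGen (D.touchRel (∅ : Set D.E)) x y → x = y := by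
    intro x y hxy
    induction hxy with
    | rel a b hab => obtain ⟨e, he, -⟩ := hab; exact absurd he (Set.notMem_empty e)
    | refl => rfl
    | symm _ _ _ ih => exact ih.symm
    | trans _ _ _ _ _ ih1 ih2 => exact ih1.trans ih2
  let φ : (D.contract (∅ : Set D.E)).V → D.V :=
    Quotient.lift (fun v => v) (fun a b hab => hlift a b hab)
  have hstep : ∀ a b : (D.contract (∅ : Set D.E)).V,
      (D.contract (∅ : Set D.E)).dstep a b → D.dstep (φ a) (φ b) := by
    rintro a b ⟨e, rfl, rfl⟩
    exact ⟨e.1, rfl, rfl⟩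
  have hpath : ∀ a b : (D.contract (∅ : Set D.E)).V,
      Relation.ReflTransGen (D.contract (∅ : Set D.E)).dstep a b →
      Relation.ReflTransGen D.dstep (φ a) (φ b) := by
    intro a b hab
    induction hab with
    | refl => exact Relation.ReflTransGen.refl
    | tail _ h2 ih => exact ih.tail (hstep _ _ h2)
  intro a b hab hba
  exact h (φ a) (φ b) (hstep a b hab) (hpath b a hba)

end MDAux

-- STATEMENT 6
theorem stmt6 (D : MultiDigraph) (hconn : D.WeaklyConnected) (hacyclic : D.Acyclic) :
    (∃ ℬ : Set (Set D.E), D.IsCutSpaceBasis ℬ ∧ ∀ S ∈ ℬ, D.IsDirectedBond S) ∧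
      ∀ A : Set D.E, (D.contract A).Acyclic → D.IsForestOn A →
        ∃ ℬ : Set (Set D.E), D.IsCutSpaceBasis ℬ ∧ (∀ S ∈ ℬ, D.IsDirectedBond S) ∧
          ∀ e ∈ A, ∃! S : Set D.E, S ∈ ℬ ∧ e ∈ S := by
  constructor
  · obtain ⟨ℬ, h1, h2, -⟩ := MDAux.main D (∅ : Set D.E)
      (MDAux.contract_empty_acyclic hacyclic)
      (fun a ha => absurd ha (Set.notMem_empty a))
    exact ⟨ℬ, h1, h2⟩
  · intro A hA1 hA2
    exact MDAux.main D A hA1 (MDAux.forest_hf hA2)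
end
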